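/- Equivalence lemma, upper bound: there is a universal constant C such that for every score function φ, every (possibly partial) function f : X → {0,1} with X ⊆ {0,1}^m, every probability distribution μ on X, and every score parameter γ with φ(μ(f⁻¹(1))) ≤ γ ≤ 1 (i.e., γ at least the score of the trivial zero-query algorithm), there exists a discount factor α* > 0 for which sR̄̄_γ^μ(f) ≤ (C/α*)·ln(γ / DS_{α*}^μ(f)). -/

import Mathlib

open Finset

/-- Deterministic decision trees querying coordinates `i : ι` of inputs `x : ι → Bool`,
with leaves labelled by elements of `L`. -/
inductive DTree (ι : Type) (L : Type) : Type
  | leaf (lab : L) : DTree ι L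
  | node (i : ι) (t0 : DTree ι L) (t1 : DTree ι L) : DTree ι L

namespace DTree

variable {ι L : Type}

/-- Output label at the leaf reached by input `x`. -/
def out : DTree ι L → (ι → Bool) → L
  | .leaf lab, _ => lab
  | .node i t0 t1, x => if x i then out t1 x else out t0 x

/-- Number of queries made on input `x` (depth of the leaf reached by `x`). -/
def cost : DTree ι L → (ι → Bool) → ℕ
  | .leaf _, _ => 0
  | .node i t0 t1, x => (if x i then cost t1 x else cost t0 x) + 1

/-- Maximum leaf depth of the tree. -/
def depth : DTree ι L → ℕ
  | .leaf _ => 0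
  | .node _ t0 t1 => max (depth t0) (depth t1) + 1

/-- The set of inputs reaching the same leaf as input `x`. -/
def leafSet : DTree ι L → (ι → Bool) → Set (ι → Bool)
  | .leaf _, _ => Set.univ
  | .node i t0 t1, x => {y | y i = x i} ∩ (if x i then leafSet t1 x else leafSet t0 x)

/-- Every leaf label of the tree satisfies the predicate `P`. -/
def allLabels : DTree ι L → (L → Prop) → Prop
  | .leaf lab, P => P lab
  | .node _ t0 t1, P => allLabels t0 P ∧ allLabels t1 P

end DTree

/-- A randomized query algorithm: a finitely supported probability distribution over
deterministic decision trees. -/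
structure RandAlg (ι : Type) (L : Type) where
  k : ℕ
  p : Fin k → ℝ
  T : Fin k → DTree ι L
  p_nonneg : ∀ j, 0 ≤ p j
  p_sum : ∑ j, p j = 1

/-- A probability distribution on inputs, supported inside the domain `X`. -/
structure InputDist (ι : Type) [Fintype ι] [DecidableEq ι] (X : Set (ι → Bool)) where
  μ : (ι → Bool) → ℝ
  nonneg : ∀ x, 0 ≤ μ x
  sum_one : ∑ x, μ x = 1
  supp : ∀ x, x ∉ X → μ x = 0

/-- A score function `φ : [0,1] → [1/2,1]`. -/
structure ScoreFun where
  φ : ℝ → ℝ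
  continuous : ContinuousOn φ (Set.Icc 0 1)
  half_le : ∀ p ∈ Set.Icc (0:ℝ) 1, 1 / 2 ≤ φ p
  le_one : ∀ p ∈ Set.Icc (0:ℝ) 1, φ p ≤ 1
  map_zero : φ 0 = 1
  map_one : φ 1 = 1
  map_half : φ (1 / 2) = 1 / 2
  symm : ∀ p ∈ Set.Icc (0:ℝ) 1, φ (1 - p) = φ p
  mono : MonotoneOn φ (Set.Icc (1 / 2) 1)

section Defs

variable {ι L : Type} [Fintype ι] [DecidableEq ι]

/-- Mass of a set of inputs under the weight function `μ`. -/
noncomputable def mass (μ : (ι → Bool) → ℝ) (S : Set (ι → Bool)) : ℝ :=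
  ∑ x, Set.indicator S μ x

/-- Score `φ(μ(ℓ₁)/μ(ℓ))` of the leaf `ℓ` reached by `x` in the tree `t`. -/
noncomputable def leafScore (S : ScoreFun) (f : (ι → Bool) → Bool) (μ : (ι → Bool) → ℝ)
    (t : DTree ι L) (x : ι → Bool) : ℝ :=
  S.φ (mass μ (t.leafSet x ∩ {y | f y = true}) / mass μ (t.leafSet x))

/-- Score of a randomized algorithm: `E_{D∼R, x∼μ}[score(D(x))]`. -/
noncomputable def algScore (S : ScoreFun) (f : (ι → Bool) → Bool) (μ : (ι → Bool) → ℝ)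
    (R : RandAlg ι L) : ℝ :=
  ∑ j, R.p j * ∑ x, μ x * leafScore S f μ (R.T j) x

/-- Expected cost `E_{D∼R, x∼μ}[cost(D(x))]`. -/
noncomputable def expCost (μ : (ι → Bool) → ℝ) (R : RandAlg ι L) : ℝ :=
  ∑ j, R.p j * ∑ x, μ x * ((R.T j).cost x : ℝ)

/-- Score-weighted cost `E[score(D(x))·cost(D(x))] / E[score(D(x))]`. -/
noncomputable def scost (S : ScoreFun) (f : (ι → Bool) → Bool) (μ : (ι → Bool) → ℝ)
    (R : RandAlg ι L) : ℝ :=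
  (∑ j, R.p j * ∑ x, μ x * (leafScore S f μ (R.T j) x * ((R.T j).cost x : ℝ))) /
    algScore S f μ R

/-- Discounted score `E[score(D(x))·e^{-α·cost(D(x))}]`. -/
noncomputable def dScore (S : ScoreFun) (f : (ι → Bool) → Bool) (μ : (ι → Bool) → ℝ)
    (α : ℝ) (R : RandAlg ι L) : ℝ :=
  ∑ j, R.p j * ∑ x, μ x *
    (leafScore S f μ (R.T j) x * Real.exp (-(α * ((R.T j).cost x : ℝ))))

/-- Maximum discounted score `DS_α^μ(f)`. -/
noncomputable def DS (S : ScoreFun) (f : (ι → Bool) → Bool) (μ : (ι → Bool) → ℝ)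
    (α : ℝ) : ℝ :=
  ⨆ R : RandAlg ι Unit, dScore S f μ α R

/-- Distributional score-weighted query complexity `sR̄̄_γ^μ(f)`. -/
noncomputable def sRdist (S : ScoreFun) (f : (ι → Bool) → Bool) (μ : (ι → Bool) → ℝ)
    (γ : ℝ) : ℝ :=
  sInf {c | ∃ R : RandAlg ι Unit, γ ≤ algScore S f μ R ∧ scost S f μ R = c}

/-- Distributional query complexity `R̄̄_γ^μ(f)` (expected cost). -/
noncomputable def Rdist (S : ScoreFun) (f : (ι → Bool) → Bool) (μ : (ι → Bool) → ℝ)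
    (γ : ℝ) : ℝ :=
  sInf {c | ∃ R : RandAlg ι Unit, γ ≤ algScore S f μ R ∧ expCost μ R = c}

/-- Maximum score-weighted distributional query complexity `sR̄̄_γ(f)`. -/
noncomputable def sRmax (S : ScoreFun) (X : Set (ι → Bool)) (f : (ι → Bool) → Bool)
    (γ : ℝ) : ℝ :=
  ⨆ μ : InputDist ι X, sRdist S f μ.μ γ

/-- Maximum distributional query complexity `R̄̄_γ(f)`. -/
noncomputable def Rmax (S : ScoreFun) (X : Set (ι → Bool)) (f : (ι → Bool) → Bool)
    (γ : ℝ) : ℝ :=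
  ⨆ μ : InputDist ι X, Rdist S f μ.μ γ

/-- Success-probability score `max{μ(ℓ₀),μ(ℓ₁)}/μ(ℓ)` of the leaf reached by `x`. -/
noncomputable def succLeafScore (f : (ι → Bool) → Bool) (μ : (ι → Bool) → ℝ)
    (t : DTree ι L) (x : ι → Bool) : ℝ :=
  max (mass μ (t.leafSet x ∩ {y | f y = false})) (mass μ (t.leafSet x ∩ {y | f y = true})) /
    mass μ (t.leafSet x)

/-- Success-probability score of a randomized algorithm. -/
noncomputable def succAlgScore (f : (ι → Bool) → Bool) (μ : (ι → Bool) → ℝ)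
    (R : RandAlg ι L) : ℝ :=
  ∑ j, R.p j * ∑ x, μ x * succLeafScore f μ (R.T j) x

/-- Distributional query complexity with the success-probability score. -/
noncomputable def succRdist (f : (ι → Bool) → Bool) (μ : (ι → Bool) → ℝ) (γ : ℝ) : ℝ :=
  sInf {c | ∃ R : RandAlg ι Unit, γ ≤ succAlgScore f μ R ∧ expCost μ R = c}

/-- Maximum distributional query complexity `R̄̄_γ(f)` with the success-probability score. -/
noncomputable def succRmax (X : Set (ι → Bool)) (f : (ι → Bool) → Bool) (γ : ℝ) : ℝ :=
  ⨆ μ : InputDist ι X, succRdist f μ.μ γ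

/-- The fraction `q = μ(ℓ₁)/μ(ℓ)` at the leaf reached by `x`. -/
noncomputable def leafBias (f : (ι → Bool) → Bool) (μ : (ι → Bool) → ℝ)
    (t : DTree ι L) (x : ι → Bool) : ℝ :=
  mass μ (t.leafSet x ∩ {y | f y = true}) / mass μ (t.leafSet x)

/-- Hellinger loss `E[2·√(q(1-q))]` of a randomized algorithm. -/
noncomputable def helLossAlg (f : (ι → Bool) → Bool) (μ : (ι → Bool) → ℝ)
    (R : RandAlg ι L) : ℝ :=
  ∑ j, R.p j * ∑ x, μ x *
    (2 * Real.sqrt (leafBias f μ (R.T j) x * (1 - leafBias f μ (R.T j) x)))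

/-- Hellinger score `E[1 - √(q(1-q))]` of a randomized algorithm. -/
noncomputable def helScoreAlg (f : (ι → Bool) → Bool) (μ : (ι → Bool) → ℝ)
    (R : RandAlg ι L) : ℝ :=
  ∑ j, R.p j * ∑ x, μ x *
    (1 - Real.sqrt (leafBias f μ (R.T j) x * (1 - leafBias f μ (R.T j) x)))

/-- `R̄̄_{Hel↓,ε}(f)`: maximum distributional complexity at Hellinger loss `ε`. -/
noncomputable def RmaxHelLoss (X : Set (ι → Bool)) (f : (ι → Bool) → Bool) (ε : ℝ) : ℝ :=
  ⨆ μ : InputDist ι X,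
    sInf {c | ∃ R : RandAlg ι Unit, helLossAlg f μ.μ R ≤ ε ∧ expCost μ.μ R = c}

/-- `R̄̄_{Hel,γ}(f)`: maximum distributional complexity at Hellinger score `γ`. -/
noncomputable def RmaxHel (X : Set (ι → Bool)) (f : (ι → Bool) → Bool) (γ : ℝ) : ℝ :=
  ⨆ μ : InputDist ι X,
    sInf {c | ∃ R : RandAlg ι Unit, γ ≤ helScoreAlg f μ.μ R ∧ expCost μ.μ R = c}

/-- Binary entropy function. -/
noncomputable def binEnt (p : ℝ) : ℝ :=
  -(p * Real.logb 2 p) - (1 - p) * Real.logb 2 (1 - p)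

/-- Exponential-entropy score `E[1 - (1/2)·2^{-h(q)}]` of a randomized algorithm. -/
noncomputable def entScoreAlg (f : (ι → Bool) → Bool) (μ : (ι → Bool) → ℝ)
    (R : RandAlg ι L) : ℝ :=
  ∑ j, R.p j * ∑ x, μ x *
    (1 - (1 / 2) * (2:ℝ) ^ (-(binEnt (leafBias f μ (R.T j) x))))

/-- `R̄̄_{Ent,γ}(f)`: maximum distributional complexity at exponential-entropy score `γ`. -/
noncomputable def RmaxEnt (X : Set (ι → Bool)) (f : (ι → Bool) → Bool) (γ : ℝ) : ℝ :=
  ⨆ μ : InputDist ι X,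
    sInf {c | ∃ R : RandAlg ι Unit, γ ≤ entScoreAlg f μ.μ R ∧ expCost μ.μ R = c}

end Defs

section WorstCase

variable {ι L : Type}

open Classical in
/-- Worst-case randomized query complexity for a generic task: minimum, over randomized
algorithms whose leaf labels satisfy `labelOK` and which on every input `x ∈ X` output a
label `z` with `good x z` with probability at least `δ`, of the maximum leaf depth over
the trees in the support. -/
noncomputable def RwcTask (X : Set (ι → Bool)) (good : (ι → Bool) → L → Prop)
    (labelOK : L → Prop) (δ : ℝ) : ℕ :=
  sInf {d : ℕ | ∃ R : RandAlg ι L,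
    (∀ j, R.p j ≠ 0 → (R.T j).allLabels labelOK) ∧
    (∀ x ∈ X, δ ≤ ∑ j, if good x ((R.T j).out x) then R.p j else 0) ∧
    ∀ j, R.p j ≠ 0 → (R.T j).depth ≤ d}

/-- Worst-case randomized query complexity `R_δ(f)` of a (partial) Boolean function. -/
noncomputable def Rwc (X : Set (ι → Bool)) (f : (ι → Bool) → Bool) (δ : ℝ) : ℕ :=
  RwcTask X (fun x b => b = f x) (fun _ : Bool => True) δ

end WorstCase

section Product

variable {m n : ℕ} {L : Type}

/-- The `i`-th block of an input to the `n`-fold direct product. -/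
def block (x : Fin n × Fin m → Bool) (i : Fin n) : Fin m → Bool := fun j => x (i, j)

/-- The product domain `Xⁿ`. -/
def Xpow (n : ℕ) (X : Set (Fin m → Bool)) : Set (Fin n × Fin m → Bool) :=
  {x | ∀ i, block x i ∈ X}

/-- The `n`-fold direct product `fⁿ`. -/
def fpow (f : (Fin m → Bool) → Bool) (x : Fin n × Fin m → Bool) : Fin n → Bool :=
  fun i => f (block x i)

/-- The product distribution `μⁿ`. -/
noncomputable def prodMu (μ : (Fin m → Bool) → ℝ) (x : Fin n × Fin m → Bool) : ℝ :=
  ∏ i, μ (block x i)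

/-- The `i`-th factor `ℓ^(i)` of the (product) leaf reached by `x` in a decision tree for `fⁿ`. -/
def blockSet (t : DTree (Fin n × Fin m) L) (x : Fin n × Fin m → Bool) (i : Fin n) :
    Set (Fin m → Bool) :=
  {y | (fun q : Fin n × Fin m => if q.1 = i then y q.2 else x q) ∈ t.leafSet x}

/-- Score of a leaf of a tree for `fⁿ` under `μⁿ`: the product of the scores of its factors. -/
noncomputable def prodLeafScore (S : ScoreFun) (f : (Fin m → Bool) → Bool)
    (μ : (Fin m → Bool) → ℝ) (t : DTree (Fin n × Fin m) L) (x : Fin n × Fin m → Bool) : ℝ :=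
  ∏ i, S.φ (mass μ (blockSet t x i ∩ {y | f y = true}) / mass μ (blockSet t x i))

/-- Score of a randomized algorithm for `fⁿ` under `μⁿ`. -/
noncomputable def algScoreN (S : ScoreFun) (f : (Fin m → Bool) → Bool)
    (μ : (Fin m → Bool) → ℝ) (R : RandAlg (Fin n × Fin m) L) : ℝ :=
  ∑ j, R.p j * ∑ x, prodMu μ x * prodLeafScore S f μ (R.T j) x

/-- Score-weighted cost of a randomized algorithm for `fⁿ` under `μⁿ`. -/
noncomputable def scostN (S : ScoreFun) (f : (Fin m → Bool) → Bool)
    (μ : (Fin m → Bool) → ℝ) (R : RandAlg (Fin n × Fin m) L) : ℝ :=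
  (∑ j, R.p j * ∑ x, prodMu μ x * (prodLeafScore S f μ (R.T j) x * ((R.T j).cost x : ℝ))) /
    algScoreN S f μ R

/-- Discounted score of a randomized algorithm for `fⁿ` under `μⁿ`. -/
noncomputable def dScoreN (S : ScoreFun) (f : (Fin m → Bool) → Bool)
    (μ : (Fin m → Bool) → ℝ) (α : ℝ) (R : RandAlg (Fin n × Fin m) L) : ℝ :=
  ∑ j, R.p j * ∑ x, prodMu μ x *
    (prodLeafScore S f μ (R.T j) x * Real.exp (-(α * ((R.T j).cost x : ℝ))))

/-- Maximum discounted score `DS_α^{μⁿ}(fⁿ)`. -/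
noncomputable def DSN (S : ScoreFun) (f : (Fin m → Bool) → Bool)
    (μ : (Fin m → Bool) → ℝ) (α : ℝ) (n : ℕ) : ℝ :=
  ⨆ R : RandAlg (Fin n × Fin m) Unit, dScoreN S f μ α R

/-- Distributional score-weighted query complexity `sR̄̄_γ^{μⁿ}(fⁿ)`. -/
noncomputable def sRdistN (S : ScoreFun) (f : (Fin m → Bool) → Bool)
    (μ : (Fin m → Bool) → ℝ) (γ : ℝ) (n : ℕ) : ℝ :=
  sInf {c | ∃ R : RandAlg (Fin n × Fin m) Unit,
    γ ≤ algScoreN S f μ R ∧ scostN S f μ R = c}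

/-- Worst-case randomized query complexity `R_δ(fⁿ)` of computing `fⁿ` exactly. -/
noncomputable def RwcN (X : Set (Fin m → Bool)) (f : (Fin m → Bool) → Bool)
    (n : ℕ) (δ : ℝ) : ℕ :=
  RwcTask (Xpow n X) (fun x z => z = fpow f x) (fun _ : Fin n → Bool => True) δ

/-- Success-probability score `max_z μ(ℓ ∩ (fⁿ)⁻¹(z))/μ(ℓ)` of a leaf of a tree for `fⁿ`
under an arbitrary distribution `μ` on `Xⁿ`. -/
noncomputable def succLeafScoreN (f : (Fin m → Bool) → Bool)
    (μ : (Fin n × Fin m → Bool) → ℝ) (t : DTree (Fin n × Fin m) L)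
    (x : Fin n × Fin m → Bool) : ℝ :=
  (⨆ z : Fin n → Bool, mass μ (t.leafSet x ∩ {y | fpow f y = z})) / mass μ (t.leafSet x)

/-- Success-probability score of a randomized algorithm for `fⁿ`. -/
noncomputable def succAlgScoreN (f : (Fin m → Bool) → Bool)
    (μ : (Fin n × Fin m → Bool) → ℝ) (R : RandAlg (Fin n × Fin m) L) : ℝ :=
  ∑ j, R.p j * ∑ x, μ x * succLeafScoreN f μ (R.T j) x

/-- Score-weighted cost of a randomized algorithm for `fⁿ` (success-probability score). -/
noncomputable def succScostN (f : (Fin m → Bool) → Bool)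
    (μ : (Fin n × Fin m → Bool) → ℝ) (R : RandAlg (Fin n × Fin m) L) : ℝ :=
  (∑ j, R.p j * ∑ x, μ x * (succLeafScoreN f μ (R.T j) x * ((R.T j).cost x : ℝ))) /
    succAlgScoreN f μ R

/-- Maximum score-weighted distributional query complexity `sR̄̄_δ(fⁿ)`
(success-probability score). -/
noncomputable def succSRmaxN (X : Set (Fin m → Bool)) (f : (Fin m → Bool) → Bool)
    (n : ℕ) (δ : ℝ) : ℝ :=
  ⨆ μ : InputDist (Fin n × Fin m) (Xpow n X),
    sInf {c | ∃ R : RandAlg (Fin n × Fin m) Unit,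
      δ ≤ succAlgScoreN f μ.μ R ∧ succScostN f μ.μ R = c}

/-- Worst-case randomized query complexity of the list-decoding task `LD_ℓⁿ ∘ f`. -/
noncomputable def RwcLD (X : Set (Fin m → Bool)) (f : (Fin m → Bool) → Bool)
    (n ℓ : ℕ) (δ : ℝ) : ℕ :=
  RwcTask (Xpow n X) (fun x S => fpow f x ∈ S)
    (fun S : Finset (Fin n → Bool) => S.card = 2 ^ (n - ℓ)) δ

open Classical in
/-- Worst-case randomized query complexity of the threshold task `Thr_kⁿ ∘ f`. -/
noncomputable def RwcThr (X : Set (Fin m → Bool)) (f : (Fin m → Bool) → Bool)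
    (n k : ℕ) (δ : ℝ) : ℕ :=
  RwcTask (Xpow n X)
    (fun x z => k ≤ (Finset.univ.filter fun i => z i = fpow f x i).card)
    (fun _ : Fin n → Bool => True) δ

open Classical in
/-- Worst-case randomized query complexity of the labelled threshold task `Label_kⁿ ∘ f`. -/
noncomputable def RwcLabel (X : Set (Fin m → Bool)) (f : (Fin m → Bool) → Bool)
    (n k : ℕ) (δ : ℝ) : ℕ :=
  RwcTask (Xpow n X)
    (fun x z => ∀ i b, z i = some b → fpow f x i = b)
    (fun z : Fin n → Option Bool =>
      (Finset.univ.filter fun i => (z i).isSome).card = k) δ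

end Product

namespace EL

open DTree Finset

variable {m : ℕ}

/-! ### Per-tree functionals -/

noncomputable def tSc (S : ScoreFun) (f : (Fin m → Bool) → Bool) (μ : (Fin m → Bool) → ℝ)
    (t : DTree (Fin m) Unit) : ℝ := ∑ x, μ x * leafScore S f μ t x

noncomputable def tNum (S : ScoreFun) (f : (Fin m → Bool) → Bool) (μ : (Fin m → Bool) → ℝ)
    (t : DTree (Fin m) Unit) : ℝ := ∑ x, μ x * (leafScore S f μ t x * (t.cost x : ℝ))

noncomputable def tDsc (S : ScoreFun) (f : (Fin m → Bool) → Bool) (μ : (Fin m → Bool) → ℝ)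
    (α : ℝ) (t : DTree (Fin m) Unit) : ℝ :=
  ∑ x, μ x * (leafScore S f μ t x * Real.exp (-(α * (t.cost x : ℝ))))

lemma algScore_eq (S : ScoreFun) (f : (Fin m → Bool) → Bool) (μ : (Fin m → Bool) → ℝ)
    (R : RandAlg (Fin m) Unit) : algScore S f μ R = ∑ j, R.p j * tSc S f μ (R.T j) := rfl

lemma dScore_eq (S : ScoreFun) (f : (Fin m → Bool) → Bool) (μ : (Fin m → Bool) → ℝ)
    (α : ℝ) (R : RandAlg (Fin m) Unit) :
    dScore S f μ α R = ∑ j, R.p j * tDsc S f μ α (R.T j) := rfl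

lemma scost_eq (S : ScoreFun) (f : (Fin m → Bool) → Bool) (μ : (Fin m → Bool) → ℝ)
    (R : RandAlg (Fin m) Unit) :
    scost S f μ R = (∑ j, R.p j * tNum S f μ (R.T j)) / algScore S f μ R := rfl

/-! ### mass and leafScore bounds -/

section Mass

variable {S : ScoreFun} {f : (Fin m → Bool) → Bool} {μ : (Fin m → Bool) → ℝ}

lemma mass_nonneg (hμ0 : ∀ x, 0 ≤ μ x) (A : Set (Fin m → Bool)) : 0 ≤ mass μ A :=
  Finset.sum_nonneg fun x _ => Set.indicator_nonneg (fun y _ => hμ0 y) x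

lemma mass_mono (hμ0 : ∀ x, 0 ≤ μ x) {A B : Set (Fin m → Bool)} (h : A ⊆ B) :
    mass μ A ≤ mass μ B :=
  Finset.sum_le_sum fun x _ => Set.indicator_le_indicator_of_subset h (fun y => hμ0 y) x

lemma mass_univ (hμ1 : ∑ x, μ x = 1) : mass μ (Set.univ : Set (Fin m → Bool)) = 1 := by
  rw [mass]; simp [hμ1]

lemma mass_singleton (x : Fin m → Bool) : mass μ {x} = μ x := by
  rw [mass]
  rw [Finset.sum_eq_single_of_mem x (Finset.mem_univ x)]
  · simp
  · intro y _ hyx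
    simp [Set.indicator_apply, hyx]

lemma bias_mem (hμ0 : ∀ x, 0 ≤ μ x) (A B : Set (Fin m → Bool)) :
    mass μ (A ∩ B) / mass μ A ∈ Set.Icc (0:ℝ) 1 := by
  constructor
  · exact div_nonneg (mass_nonneg hμ0 _) (mass_nonneg hμ0 _)
  · rcases eq_or_lt_of_le (mass_nonneg hμ0 A) with h | h
    · rw [← h, div_zero]; norm_num
    · exact div_le_one_of_le₀ (mass_mono hμ0 Set.inter_subset_left) (le_of_lt h)

lemma leafScore_mem (hμ0 : ∀ x, 0 ≤ μ x) (t : DTree (Fin m) Unit) (x : Fin m → Bool) :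
    leafScore S f μ t x ∈ Set.Icc (1/2 : ℝ) 1 := by
  have h := bias_mem (μ := μ) hμ0 (t.leafSet x) {y | f y = true}
  exact ⟨S.half_le _ h, S.le_one _ h⟩

lemma leafScore_nonneg (hμ0 : ∀ x, 0 ≤ μ x) (t : DTree (Fin m) Unit) (x : Fin m → Bool) :
    0 ≤ leafScore S f μ t x := le_trans (by norm_num) (leafScore_mem hμ0 t x).1

lemma gamma0_mem (hμ0 : ∀ x, 0 ≤ μ x) (hμ1 : ∑ x, μ x = 1) :
    S.φ (mass μ {y | f y = true}) ∈ Set.Icc (1/2 : ℝ) 1 := by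
  have h0 : (0:ℝ) ≤ mass μ {y | f y = true} := mass_nonneg hμ0 _
  have h1 : mass μ {y | f y = true} ≤ 1 := by
    rw [← mass_univ (μ := μ) hμ1]; exact mass_mono hμ0 (Set.subset_univ _)
  exact ⟨S.half_le _ ⟨h0, h1⟩, S.le_one _ ⟨h0, h1⟩⟩

lemma tSc_le_one (hμ0 : ∀ x, 0 ≤ μ x) (hμ1 : ∑ x, μ x = 1) (t : DTree (Fin m) Unit) :
    tSc S f μ t ≤ 1 := by
  rw [tSc, ← hμ1]
  apply Finset.sum_le_sum
  intro x _
  have := (leafScore_mem (S := S) (f := f) hμ0 t x).2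
  nlinarith [hμ0 x]

lemma tSc_nonneg (hμ0 : ∀ x, 0 ≤ μ x) (t : DTree (Fin m) Unit) : 0 ≤ tSc S f μ t :=
  Finset.sum_nonneg fun x _ => mul_nonneg (hμ0 x) (leafScore_nonneg hμ0 t x)

lemma tNum_nonneg (hμ0 : ∀ x, 0 ≤ μ x) (t : DTree (Fin m) Unit) : 0 ≤ tNum S f μ t :=
  Finset.sum_nonneg fun x _ => mul_nonneg (hμ0 x)
    (mul_nonneg (leafScore_nonneg hμ0 t x) (Nat.cast_nonneg _))

lemma tDsc_nonneg (hμ0 : ∀ x, 0 ≤ μ x) (α : ℝ) (t : DTree (Fin m) Unit) :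
    0 ≤ tDsc S f μ α t :=
  Finset.sum_nonneg fun x _ => mul_nonneg (hμ0 x)
    (mul_nonneg (leafScore_nonneg hμ0 t x) (Real.exp_pos _).le)

lemma tDsc_le_one (hμ0 : ∀ x, 0 ≤ μ x) (hμ1 : ∑ x, μ x = 1) {α : ℝ} (hα : 0 ≤ α)
    (t : DTree (Fin m) Unit) : tDsc S f μ α t ≤ 1 := by
  rw [tDsc, ← hμ1]
  apply Finset.sum_le_sum
  intro x _
  have h1 := (leafScore_mem (S := S) (f := f) hμ0 t x).2
  have h0 := leafScore_nonneg (S := S) (f := f) hμ0 t x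
  have he : Real.exp (-(α * (t.cost x : ℝ))) ≤ 1 := by
    rw [Real.exp_le_one_iff]
    have : (0:ℝ) ≤ α * (t.cost x : ℝ) := mul_nonneg hα (Nat.cast_nonneg _)
    linarith
  have he0 : (0:ℝ) ≤ Real.exp (-(α * (t.cost x : ℝ))) := (Real.exp_pos _).le
  have hse : leafScore S f μ t x * Real.exp (-(α * (t.cost x : ℝ))) ≤ 1 := by nlinarith
  calc μ x * (leafScore S f μ t x * Real.exp (-(α * (t.cost x : ℝ)))) ≤ μ x * 1 :=
        mul_le_mul_of_nonneg_left hse (hμ0 x)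
    _ = μ x := mul_one _

end Mass

end EL
namespace EL

open DTree Finset

variable {m : ℕ}

section Trees

variable {S : ScoreFun} {f : (Fin m → Bool) → Bool} {μ : (Fin m → Bool) → ℝ}

/-! ### the trivial tree -/

lemma leafScore_leaf (hμ1 : ∑ x, μ x = 1) (x : Fin m → Bool) :
    leafScore S f μ (DTree.leaf () : DTree (Fin m) Unit) x = S.φ (mass μ {y | f y = true}) := by
  rw [leafScore, leafSet]
  rw [Set.univ_inter, mass_univ hμ1, div_one]

lemma tDsc_leaf (hμ1 : ∑ x, μ x = 1) (α : ℝ) :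
    tDsc S f μ α (DTree.leaf () : DTree (Fin m) Unit) = S.φ (mass μ {y | f y = true}) := by
  rw [tDsc]
  have : ∀ x ∈ (univ : Finset (Fin m → Bool)), μ x *
      (leafScore S f μ (DTree.leaf () : DTree (Fin m) Unit) x *
        Real.exp (-(α * ((DTree.leaf () : DTree (Fin m) Unit).cost x : ℝ))))
      = μ x * S.φ (mass μ {y | f y = true}) := by
    intro x _
    rw [leafScore_leaf hμ1]
    simp [DTree.cost]
  rw [Finset.sum_congr rfl this, ← Finset.sum_mul, hμ1, one_mul]

lemma tSc_leaf (hμ1 : ∑ x, μ x = 1) :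
    tSc S f μ (DTree.leaf () : DTree (Fin m) Unit) = S.φ (mass μ {y | f y = true}) := by
  rw [tSc]
  have : ∀ x ∈ (univ : Finset (Fin m → Bool)), μ x *
      leafScore S f μ (DTree.leaf () : DTree (Fin m) Unit) x
      = μ x * S.φ (mass μ {y | f y = true}) := by
    intro x _; rw [leafScore_leaf hμ1]
  rw [Finset.sum_congr rfl this, ← Finset.sum_mul, hμ1, one_mul]

lemma tNum_leaf : tNum S f μ (DTree.leaf () : DTree (Fin m) Unit) = 0 := by
  rw [tNum]; simp [DTree.cost]

/-- Decay bound: every tree has discounted score at most `max γ₀ e^{-α}`. -/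
lemma tDsc_le_max (hμ0 : ∀ x, 0 ≤ μ x) (hμ1 : ∑ x, μ x = 1) {α : ℝ} (hα : 0 ≤ α)
    (t : DTree (Fin m) Unit) :
    tDsc S f μ α t ≤ max (S.φ (mass μ {y | f y = true})) (Real.exp (-α)) := by
  cases t with
  | leaf l => rw [tDsc_leaf hμ1]; exact le_max_left _ _
  | node i t0 t1 =>
    apply le_trans _ (le_max_right _ _)
    rw [tDsc]
    calc ∑ x, μ x * (leafScore S f μ (DTree.node i t0 t1) x *
          Real.exp (-(α * ((DTree.node i t0 t1).cost x : ℝ))))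
        ≤ ∑ x, μ x * Real.exp (-α) := by
          apply Finset.sum_le_sum
          intro x _
          apply mul_le_mul_of_nonneg_left _ (hμ0 x)
          have hs := (leafScore_mem (S := S) (f := f) hμ0 (DTree.node i t0 t1) x)
          have hc : (1:ℝ) ≤ (((DTree.node i t0 t1).cost x : ℕ) : ℝ) := by
            have : 1 ≤ (DTree.node i t0 t1).cost x := by
              rw [DTree.cost]; omega
            exact_mod_cast this
          have he : Real.exp (-(α * (((DTree.node i t0 t1).cost x : ℕ) : ℝ))) ≤
              Real.exp (-α) := by
            apply Real.exp_le_exp.2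
            nlinarith
          have he0 : (0:ℝ) ≤ Real.exp (-(α * (((DTree.node i t0 t1).cost x : ℕ) : ℝ))) :=
            (Real.exp_pos _).le
          nlinarith [hs.1, hs.2]
      _ = Real.exp (-α) := by rw [← Finset.sum_mul, hμ1, one_mul]

/-! ### truncation -/

def trunc : ℕ → DTree (Fin m) Unit → DTree (Fin m) Unit
  | 0, _ => .leaf ()
  | _+1, .leaf l => .leaf l
  | d+1, .node i a b => .node i (trunc d a) (trunc d b)

lemma trunc_cost_le (d : ℕ) (t : DTree (Fin m) Unit) (x : Fin m → Bool) :
    (trunc d t).cost x ≤ min d (t.cost x) := by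
  induction d generalizing t with
  | zero => simp [trunc, DTree.cost]
  | succ d ih =>
    cases t with
    | leaf l => simp [trunc, DTree.cost]
    | node i a b =>
      rw [trunc, DTree.cost, DTree.cost]
      by_cases h : x i
      · have := ih b
        rw [if_pos h, if_pos h]
        omega
      · have := ih a
        simp only [if_neg h]
        omega

lemma trunc_leafSet_cost (d : ℕ) (t : DTree (Fin m) Unit) (x : Fin m → Bool)
    (h : t.cost x ≤ d) :
    (trunc d t).leafSet x = t.leafSet x ∧ (trunc d t).cost x = t.cost x := by
  induction d generalizing t with
  | zero =>
    cases t with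
    | leaf l => exact ⟨rfl, rfl⟩
    | node i a b =>
      exfalso; rw [DTree.cost] at h; omega
  | succ d ih =>
    cases t with
    | leaf l => exact ⟨rfl, rfl⟩
    | node i a b =>
      rw [DTree.cost] at h
      by_cases hx : x i
      · have hb : b.cost x ≤ d := by rw [if_pos hx] at h; omega
        obtain ⟨h1, h2⟩ := ih b hb
        constructor
        · rw [trunc, DTree.leafSet, DTree.leafSet, if_pos hx, if_pos hx, h1]
        · rw [trunc, DTree.cost, DTree.cost, if_pos hx, if_pos hx, h2]
      · have hb : a.cost x ≤ d := by rw [if_neg hx] at h; omega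
        obtain ⟨h1, h2⟩ := ih a hb
        constructor
        · rw [trunc, DTree.leafSet, DTree.leafSet, if_neg hx, if_neg hx, h1]
        · rw [trunc, DTree.cost, DTree.cost, if_neg hx, if_neg hx, h2]

lemma trunc_leafScore (d : ℕ) (t : DTree (Fin m) Unit) (x : Fin m → Bool)
    (h : t.cost x ≤ d) :
    leafScore S f μ (trunc d t) x = leafScore S f μ t x := by
  rw [leafScore, leafScore, (trunc_leafSet_cost d t x h).1]

lemma cost_le_depth (t : DTree (Fin m) Unit) (x : Fin m → Bool) : t.cost x ≤ t.depth := by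
  induction t with
  | leaf l => simp [DTree.cost, DTree.depth]
  | node i a b iha ihb =>
    rw [DTree.cost, DTree.depth]
    have h1 : a.depth ≤ max a.depth b.depth := le_max_left _ _
    have h2 : b.depth ≤ max a.depth b.depth := le_max_right _ _
    by_cases h : x i
    · rw [if_pos h]; omega
    · rw [if_neg h]; omega

/-! ### the full tree -/

def allT : List (Fin m) → DTree (Fin m) Unit
  | [] => .leaf ()
  | i :: l => .node i (allT l) (allT l)

lemma allT_cost (l : List (Fin m)) (x : Fin m → Bool) : (allT l).cost x = l.length := by
  induction l with
  | nil => simp [allT, DTree.cost]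
  | cons i l ih =>
    rw [allT, DTree.cost]
    by_cases h : x i <;> simp [h, ih]

lemma allT_leafSet (l : List (Fin m)) (x : Fin m → Bool) :
    (allT l).leafSet x = {y | ∀ i ∈ l, y i = x i} := by
  induction l with
  | nil => simp [allT, DTree.leafSet]
  | cons i l ih =>
    rw [allT, DTree.leafSet]
    have : (if x i then (allT l).leafSet x else (allT l).leafSet x) = (allT l).leafSet x := by
      by_cases h : x i <;> simp [h]
    rw [this, ih]
    ext y
    simp only [Set.mem_inter_iff, Set.mem_setOf_eq, List.mem_cons]
    constructor
    · rintro ⟨h1, h2⟩ j (rfl | hj)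
      · exact h1
      · exact h2 j hj
    · intro h
      exact ⟨h i (Or.inl rfl), fun j hj => h j (Or.inr hj)⟩

noncomputable def fullT : DTree (Fin m) Unit := allT (List.finRange m)

lemma fullT_cost (x : Fin m → Bool) : (fullT : DTree (Fin m) Unit).cost x = m := by
  rw [fullT, allT_cost, List.length_finRange]

lemma fullT_leafSet (x : Fin m → Bool) :
    (fullT : DTree (Fin m) Unit).leafSet x = {x} := by
  rw [fullT, allT_leafSet]
  ext y
  simp only [Set.mem_setOf_eq, Set.mem_singleton_iff]
  constructor
  · intro h; funext i; exact h i (List.mem_finRange i)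
  · rintro rfl i _; rfl

lemma leafScore_of_singleton (hμ0 : ∀ x, 0 ≤ μ x) (t : DTree (Fin m) Unit)
    (x : Fin m → Bool) (h : t.leafSet x = {x}) : leafScore S f μ t x = 1 := by
  rw [leafScore, h]
  rcases eq_or_lt_of_le (hμ0 x) with hx | hx
  · have h0 : mass μ ({x} ∩ {y | f y = true}) = 0 := by
      have hle := mass_mono (μ := μ) hμ0 (Set.inter_subset_left (s := {x}) (t := {y | f y = true}))
      rw [mass_singleton, ← hx] at hle
      have hge := mass_nonneg (μ := μ) hμ0 ({x} ∩ {y | f y = true})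
      linarith
    rw [h0, zero_div, S.map_zero]
  · rw [mass_singleton]
    by_cases hf : f x = true
    · have : ({x} : Set (Fin m → Bool)) ∩ {y | f y = true} = {x} := by
        ext y; simp only [Set.mem_inter_iff, Set.mem_singleton_iff, Set.mem_setOf_eq]
        constructor
        · rintro ⟨rfl, _⟩; rfl
        · rintro rfl; exact ⟨rfl, hf⟩
      rw [this, mass_singleton, div_self (ne_of_gt hx), S.map_one]
    · have : ({x} : Set (Fin m → Bool)) ∩ {y | f y = true} = ∅ := by
        ext y; simp only [Set.mem_inter_iff, Set.mem_singleton_iff, Set.mem_setOf_eq,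
          Set.mem_empty_iff_false, iff_false, not_and]
        rintro rfl; exact hf
      rw [this]
      have : mass μ (∅ : Set (Fin m → Bool)) = 0 := by rw [mass]; simp
      rw [this, zero_div, S.map_zero]

lemma leafScore_fullT (hμ0 : ∀ x, 0 ≤ μ x) (x : Fin m → Bool) :
    leafScore S f μ (fullT : DTree (Fin m) Unit) x = 1 :=
  leafScore_of_singleton hμ0 _ x (fullT_leafSet x)

lemma tSc_fullT (hμ0 : ∀ x, 0 ≤ μ x) (hμ1 : ∑ x, μ x = 1) :
    tSc S f μ (fullT : DTree (Fin m) Unit) = 1 := by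
  rw [tSc]
  have : ∀ x ∈ (univ : Finset (Fin m → Bool)),
      μ x * leafScore S f μ (fullT : DTree (Fin m) Unit) x = μ x := by
    intro x _; rw [leafScore_fullT hμ0, mul_one]
  rw [Finset.sum_congr rfl this, hμ1]

lemma tNum_fullT (hμ0 : ∀ x, 0 ≤ μ x) (hμ1 : ∑ x, μ x = 1) :
    tNum S f μ (fullT : DTree (Fin m) Unit) = m := by
  rw [tNum]
  have : ∀ x ∈ (univ : Finset (Fin m → Bool)),
      μ x * (leafScore S f μ (fullT : DTree (Fin m) Unit) x *
        (((fullT : DTree (Fin m) Unit).cost x : ℕ) : ℝ)) = μ x * m := by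
    intro x _; rw [leafScore_fullT hμ0, fullT_cost, one_mul]
  rw [Finset.sum_congr rfl this, ← Finset.sum_mul, hμ1, one_mul]

end Trees

end EL
namespace EL

open DTree Finset

variable {m : ℕ}

/-! ### Randomized algorithm combinators -/

noncomputable def oneAlg (t : DTree (Fin m) Unit) : RandAlg (Fin m) Unit where
  k := 1
  p := fun _ => 1
  T := fun _ => t
  p_nonneg := fun _ => zero_le_one
  p_sum := by simp

instance : Nonempty (RandAlg (Fin m) Unit) := ⟨oneAlg (.leaf ())⟩

lemma oneAlg_F (t : DTree (Fin m) Unit) (F : DTree (Fin m) Unit → ℝ) :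
    ∑ j, (oneAlg t).p j * F ((oneAlg t).T j) = F t := by
  show ∑ j : Fin 1, (1:ℝ) * F t = F t
  simp

noncomputable def mixAlg (cap : ℕ) (q : ℕ → ℝ) (tf : ℕ → DTree (Fin m) Unit)
    (hq : ∀ d, 0 ≤ q d) (hsum : ∑ d ∈ Finset.range (cap+1), q d = 1) :
    RandAlg (Fin m) Unit where
  k := cap + 1
  p := fun j => q j.val
  T := fun j => tf j.val
  p_nonneg := fun _ => hq _
  p_sum := by rw [Fin.sum_univ_eq_sum_range (fun d => q d)]; exact hsum

lemma mixAlg_F (cap : ℕ) (q : ℕ → ℝ) (tf : ℕ → DTree (Fin m) Unit)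
    (hq : ∀ d, 0 ≤ q d) (hsum : ∑ d ∈ Finset.range (cap+1), q d = 1)
    (F : DTree (Fin m) Unit → ℝ) :
    ∑ j, (mixAlg cap q tf hq hsum).p j * F ((mixAlg cap q tf hq hsum).T j)
      = ∑ d ∈ Finset.range (cap+1), q d * F (tf d) :=
  Fin.sum_univ_eq_sum_range (fun d => q d * F (tf d)) (cap+1)

noncomputable def mix2 (R1 R2 : RandAlg (Fin m) Unit) (c : ℝ) (h0 : 0 ≤ c) (h1 : c ≤ 1) :
    RandAlg (Fin m) Unit where
  k := R1.k + R2.k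
  p := Fin.append (fun j => c * R1.p j) (fun j => (1-c) * R2.p j)
  T := Fin.append R1.T R2.T
  p_nonneg := by
    intro j
    refine Fin.addCases (fun i => ?_) (fun i => ?_) j
    · rw [Fin.append_left]; exact mul_nonneg h0 (R1.p_nonneg i)
    · rw [Fin.append_right]; exact mul_nonneg (by linarith) (R2.p_nonneg i)
  p_sum := by
    rw [Fin.sum_univ_add]
    simp only [Fin.append_left, Fin.append_right]
    rw [← Finset.mul_sum, ← Finset.mul_sum, R1.p_sum, R2.p_sum]
    ring

lemma mix2_F (R1 R2 : RandAlg (Fin m) Unit) (c : ℝ) (h0 : 0 ≤ c) (h1 : c ≤ 1)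
    (F : DTree (Fin m) Unit → ℝ) :
    ∑ j, (mix2 R1 R2 c h0 h1).p j * F ((mix2 R1 R2 c h0 h1).T j)
      = c * (∑ j, R1.p j * F (R1.T j)) + (1-c) * (∑ j, R2.p j * F (R2.T j)) := by
  show ∑ j : Fin (R1.k + R2.k), _ = _
  rw [Fin.sum_univ_add]
  simp only [mix2, Fin.append_left, Fin.append_right]
  rw [Finset.mul_sum, Finset.mul_sum]
  congr 1 <;> · apply Finset.sum_congr rfl; intro j _; ring

/-! ### algorithm-level functionals -/

noncomputable def algNum (S : ScoreFun) (f : (Fin m → Bool) → Bool) (μ : (Fin m → Bool) → ℝ)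
    (R : RandAlg (Fin m) Unit) : ℝ := ∑ j, R.p j * tNum S f μ (R.T j)

lemma scost_eq' (S : ScoreFun) (f : (Fin m → Bool) → Bool) (μ : (Fin m → Bool) → ℝ)
    (R : RandAlg (Fin m) Unit) :
    scost S f μ R = algNum S f μ R / algScore S f μ R := rfl

section AlgFacts

variable {S : ScoreFun} {f : (Fin m → Bool) → Bool} {μ : (Fin m → Bool) → ℝ}

lemma algScore_nonneg (hμ0 : ∀ x, 0 ≤ μ x) (R : RandAlg (Fin m) Unit) :
    0 ≤ algScore S f μ R :=
  Finset.sum_nonneg fun j _ => mul_nonneg (R.p_nonneg j) (tSc_nonneg hμ0 _)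

lemma algNum_nonneg (hμ0 : ∀ x, 0 ≤ μ x) (R : RandAlg (Fin m) Unit) :
    0 ≤ algNum S f μ R :=
  Finset.sum_nonneg fun j _ => mul_nonneg (R.p_nonneg j) (tNum_nonneg hμ0 _)

lemma scost_nonneg (hμ0 : ∀ x, 0 ≤ μ x) (R : RandAlg (Fin m) Unit) :
    0 ≤ scost S f μ R :=
  div_nonneg (algNum_nonneg hμ0 R) (algScore_nonneg hμ0 R)

lemma alg_wavg_le {F : DTree (Fin m) Unit → ℝ} {b : ℝ} (hb : ∀ t, F t ≤ b)
    (R : RandAlg (Fin m) Unit) : ∑ j, R.p j * F (R.T j) ≤ b := by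
  calc ∑ j, R.p j * F (R.T j) ≤ ∑ j, R.p j * b :=
        Finset.sum_le_sum fun j _ => mul_le_mul_of_nonneg_left (hb _) (R.p_nonneg j)
    _ = b := by rw [← Finset.sum_mul, R.p_sum, one_mul]

lemma dScore_le_one (hμ0 : ∀ x, 0 ≤ μ x) (hμ1 : ∑ x, μ x = 1) {α : ℝ} (hα : 0 ≤ α)
    (R : RandAlg (Fin m) Unit) : dScore S f μ α R ≤ 1 := by
  rw [dScore_eq]
  exact alg_wavg_le (fun t => tDsc_le_one hμ0 hμ1 hα t) R

lemma DS_bddAbove (hμ0 : ∀ x, 0 ≤ μ x) (hμ1 : ∑ x, μ x = 1) {α : ℝ} (hα : 0 ≤ α) :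
    BddAbove (Set.range (fun R : RandAlg (Fin m) Unit => dScore S f μ α R)) := by
  refine ⟨1, ?_⟩
  rintro _ ⟨R, rfl⟩
  exact dScore_le_one hμ0 hμ1 hα R

lemma DS_le (hb : ∀ t, tDsc S f μ α t ≤ b) : DS S f μ α ≤ b := by
  apply ciSup_le
  intro R
  rw [dScore_eq]
  exact alg_wavg_le hb R

lemma DS_ge_gamma0 (hμ0 : ∀ x, 0 ≤ μ x) (hμ1 : ∑ x, μ x = 1) {α : ℝ} (hα : 0 ≤ α) :
    S.φ (mass μ {y | f y = true}) ≤ DS S f μ α := by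
  have h : dScore S f μ α (oneAlg (DTree.leaf () : DTree (Fin m) Unit))
      = S.φ (mass μ {y | f y = true}) := by
    rw [dScore_eq, oneAlg_F, tDsc_leaf hμ1]
  rw [← h]
  exact le_ciSup (DS_bddAbove hμ0 hμ1 hα) _

lemma DS_pos (hμ0 : ∀ x, 0 ≤ μ x) (hμ1 : ∑ x, μ x = 1) {α : ℝ} (hα : 0 ≤ α) :
    0 < DS S f μ α := by
  have h1 := DS_ge_gamma0 (S := S) (f := f) hμ0 hμ1 hα
  have h2 := (gamma0_mem (S := S) (f := f) hμ0 hμ1).1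
  linarith

lemma DS_le_one (hμ0 : ∀ x, 0 ≤ μ x) (hμ1 : ∑ x, μ x = 1) {α : ℝ} (hα : 0 ≤ α) :
    DS S f μ α ≤ 1 := DS_le (fun t => tDsc_le_one hμ0 hμ1 hα t)

/-! ### sRdist facts -/

lemma sRdist_bddBelow (hμ0 : ∀ x, 0 ≤ μ x) (γ : ℝ) :
    BddBelow {c | ∃ R : RandAlg (Fin m) Unit, γ ≤ algScore S f μ R ∧ scost S f μ R = c} := by
  refine ⟨0, ?_⟩
  rintro c ⟨R, _, rfl⟩
  exact scost_nonneg hμ0 R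

lemma sRdist_le (hμ0 : ∀ x, 0 ≤ μ x) {γ : ℝ} (R : RandAlg (Fin m) Unit)
    (h : γ ≤ algScore S f μ R) : sRdist S f μ γ ≤ scost S f μ R :=
  csInf_le (sRdist_bddBelow hμ0 γ) ⟨R, h, rfl⟩

end AlgFacts

/-! ### capped geometric weights -/

noncomputable def gw (ρ : ℝ) (cap : ℕ) (d : ℕ) : ℝ := if d = cap then ρ^cap else (1-ρ)*ρ^d

lemma gw_nonneg {ρ : ℝ} (h0 : 0 ≤ ρ) (h1 : ρ ≤ 1) (cap d : ℕ) : 0 ≤ gw ρ cap d := by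
  rw [gw]
  split
  · positivity
  · have : (0:ℝ) ≤ 1 - ρ := by linarith
    positivity

lemma gw_tail {ρ : ℝ} (hρ : ρ ≠ 1) {c cap : ℕ} (hc : c ≤ cap) :
    ∑ d ∈ Finset.Ico c (cap+1), gw ρ cap d = ρ^c := by
  rw [Finset.sum_Ico_succ_top hc]
  have h1 : ∀ d ∈ Finset.Ico c cap, gw ρ cap d = (1-ρ)*ρ^d := by
    intro d hd
    rw [Finset.mem_Ico] at hd
    rw [gw, if_neg (by omega)]
  rw [Finset.sum_congr rfl h1, gw, if_pos rfl]
  rw [← Finset.mul_sum, geom_sum_Ico' hρ hc]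
  have hne : (1:ℝ) - ρ ≠ 0 := sub_ne_zero.mpr (Ne.symm hρ)
  have : (1-ρ) * ((ρ^c - ρ^cap)/(1-ρ)) = ρ^c - ρ^cap := by field_simp
  rw [this]
  ring

lemma gw_sum {ρ : ℝ} (hρ : ρ ≠ 1) (cap : ℕ) :
    ∑ d ∈ Finset.range (cap+1), gw ρ cap d = 1 := by
  have := gw_tail hρ (Nat.zero_le cap)
  rw [pow_zero] at this
  rw [← this, Finset.range_eq_Ico]

lemma gw_ite {ρ : ℝ} (hρ : ρ ≠ 1) {c cap : ℕ} (hc : c ≤ cap) (A B : ℝ) :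
    ∑ d ∈ Finset.range (cap+1), gw ρ cap d * (if c ≤ d then A else B)
      = ρ^c * A + (1 - ρ^c) * B := by
  have key : ∀ d, gw ρ cap d * (if c ≤ d then A else B)
      = gw ρ cap d * B + gw ρ cap d * (if c ≤ d then A - B else 0) := by
    intro d
    split <;> ring
  simp only [key]
  rw [Finset.sum_add_distrib, ← Finset.sum_mul, gw_sum hρ, one_mul]
  have h2 : ∑ d ∈ Finset.range (cap+1), gw ρ cap d * (if c ≤ d then A - B else 0)
      = ∑ d ∈ Finset.Ico c (cap+1), gw ρ cap d * (A - B) := by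
    rw [← Finset.sum_filter_add_sum_filter_not (Finset.range (cap+1)) (fun d => c ≤ d)]
    have hf : Finset.filter (fun d => c ≤ d) (Finset.range (cap+1)) = Finset.Ico c (cap+1) := by
      ext d
      simp only [Finset.mem_filter, Finset.mem_range, Finset.mem_Ico]
      omega
    rw [hf]
    have hz : ∑ d ∈ Finset.filter (fun d => ¬ c ≤ d) (Finset.range (cap+1)),
        gw ρ cap d * (if c ≤ d then A - B else 0) = 0 := by
      apply Finset.sum_eq_zero
      intro d hd
      rw [Finset.mem_filter] at hd
      rw [if_neg hd.2, mul_zero]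
    rw [hz, add_zero]
    apply Finset.sum_congr rfl
    intro d hd
    rw [Finset.mem_Ico] at hd
    rw [if_pos hd.1]
  rw [h2, ← Finset.sum_mul, gw_tail hρ hc]
  ring

lemma min_cast_sum (c d : ℕ) :
    ((min d c : ℕ) : ℝ) = ∑ k ∈ Finset.range c, (if k + 1 ≤ d then (1:ℝ) else 0) := by
  induction c with
  | zero => simp
  | succ c ih =>
    rw [Finset.sum_range_succ, ← ih]
    by_cases h : c + 1 ≤ d
    · rw [if_pos h]
      have : min d (c+1) = min d c + 1 := by omega
      rw [this]; push_cast; ring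
    · rw [if_neg h]
      have : min d (c+1) = min d c := by omega
      rw [this]; ring

lemma gw_min {ρ : ℝ} (h0 : 0 ≤ ρ) (h1 : ρ < 1) {c cap : ℕ} (hc : c ≤ cap) :
    ∑ d ∈ Finset.range (cap+1), gw ρ cap d * ((min d c : ℕ) : ℝ)
      ≤ (1 - ρ^c) / (1 - ρ) := by
  have hρ : ρ ≠ 1 := ne_of_lt h1
  have step : ∑ d ∈ Finset.range (cap+1), gw ρ cap d * ((min d c : ℕ) : ℝ)
      = ∑ k ∈ Finset.range c, ρ^(k+1) := by
    have : ∀ d ∈ Finset.range (cap+1), gw ρ cap d * ((min d c : ℕ) : ℝ)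
        = ∑ k ∈ Finset.range c, gw ρ cap d * (if k + 1 ≤ d then (1:ℝ) else 0) := by
      intro d _
      rw [min_cast_sum, Finset.mul_sum]
    rw [Finset.sum_congr rfl this, Finset.sum_comm]
    apply Finset.sum_congr rfl
    intro k hk
    rw [Finset.mem_range] at hk
    have hkc : k + 1 ≤ cap := by omega
    have := gw_ite hρ hkc (1:ℝ) (0:ℝ)
    rw [this]; ring
  rw [step]
  have hsum : ∑ k ∈ Finset.range c, ρ^(k+1) = ρ * ∑ k ∈ Finset.range c, ρ^k := by
    rw [Finset.mul_sum]
    apply Finset.sum_congr rfl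
    intro k _; ring
  rw [hsum, geom_sum_eq hρ]
  have hpos : 0 < 1 - ρ := by linarith
  have hpc : ρ^c ≤ 1 := pow_le_one₀ h0 (le_of_lt h1)
  have hpc0 : 0 ≤ ρ^c := pow_nonneg h0 c
  have heq : (ρ^c - 1)/(ρ - 1) = (1 - ρ^c)/(1-ρ) := by
    rw [div_eq_div_iff (by linarith) (by linarith)]; ring
  rw [heq, ← mul_div_assoc]
  rw [div_le_div_iff₀ hpos hpos]
  have key : ρ * ((1 - ρ^c) * (1-ρ)) ≤ 1 * ((1 - ρ^c)*(1-ρ)) :=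
    mul_le_mul_of_nonneg_right (by linarith) (mul_nonneg (by linarith) hpos.le)
  nlinarith [key]

end EL
namespace EL

open DTree Finset

variable {m : ℕ}

section Stopped

variable {S : ScoreFun} {f : (Fin m → Bool) → Bool} {μ : (Fin m → Bool) → ℝ}

/-! ### stopped score and discounted mass -/

noncomputable def Wt (S : ScoreFun) (f : (Fin m → Bool) → Bool) (μ : (Fin m → Bool) → ℝ)
    (α : ℝ) (t : DTree (Fin m) Unit) : ℝ :=
  ∑ x, μ x * (leafScore S f μ t x * Real.exp (-(α * (t.cost x : ℝ)))
      + (1 - Real.exp (-(α * (t.cost x : ℝ)))) / 2)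

noncomputable def Vt (μ : (Fin m → Bool) → ℝ) (α : ℝ) (t : DTree (Fin m) Unit) : ℝ :=
  ∑ x, μ x * (1 - Real.exp (-(α * ((DTree.cost t x : ℕ) : ℝ))))

lemma tDsc_eq_Wt_sub (α : ℝ) (t : DTree (Fin m) Unit) :
    tDsc S f μ α t = Wt S f μ α t - Vt μ α t / 2 := by
  rw [tDsc, Wt, Vt, Finset.sum_div, ← Finset.sum_sub_distrib]
  apply Finset.sum_congr rfl
  intro x _
  ring

lemma Wt_le_one (hμ0 : ∀ x, 0 ≤ μ x) (hμ1 : ∑ x, μ x = 1) {α : ℝ} (hα : 0 ≤ α)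
    (t : DTree (Fin m) Unit) : Wt S f μ α t ≤ 1 := by
  rw [Wt]
  calc (∑ x, μ x * (leafScore S f μ t x * Real.exp (-(α * (t.cost x : ℝ)))
          + (1 - Real.exp (-(α * (t.cost x : ℝ)))) / 2))
      ≤ ∑ x, μ x := by
        apply Finset.sum_le_sum
        intro x _
        have hs := leafScore_mem (S := S) (f := f) hμ0 t x
        have he1 : Real.exp (-(α * (t.cost x : ℝ))) ≤ 1 := by
          rw [Real.exp_le_one_iff]
          have : (0:ℝ) ≤ α * (t.cost x : ℝ) := mul_nonneg hα (Nat.cast_nonneg _)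
          linarith
        have he0 : (0:ℝ) < Real.exp (-(α * (t.cost x : ℝ))) := Real.exp_pos _
        have key : leafScore S f μ t x * Real.exp (-(α * (t.cost x : ℝ)))
            + (1 - Real.exp (-(α * (t.cost x : ℝ)))) / 2 ≤ 1 := by nlinarith [hs.1, hs.2]
        calc μ x * _ ≤ μ x * 1 := mul_le_mul_of_nonneg_left key (hμ0 x)
          _ = μ x := mul_one _
    _ = 1 := hμ1

lemma Vt_nonneg (hμ0 : ∀ x, 0 ≤ μ x) {α : ℝ} (hα : 0 ≤ α) (t : DTree (Fin m) Unit) :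
    0 ≤ Vt μ α t := by
  apply Finset.sum_nonneg
  intro x _
  apply mul_nonneg (hμ0 x)
  have : Real.exp (-(α * (t.cost x : ℝ))) ≤ 1 := by
    rw [Real.exp_le_one_iff]
    have : (0:ℝ) ≤ α * (t.cost x : ℝ) := mul_nonneg hα (Nat.cast_nonneg _)
    linarith
  linarith

lemma Vt_le_two_sub (hμ0 : ∀ x, 0 ≤ μ x) (hμ1 : ∑ x, μ x = 1) {α : ℝ} (hα : 0 ≤ α)
    (t : DTree (Fin m) Unit) : Vt μ α t ≤ 2 * (1 - Wt S f μ α t) := by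
  have step : Vt μ α t ≤ ∑ x, (2 * μ x - 2 * (μ x * (leafScore S f μ t x *
      Real.exp (-(α * (t.cost x : ℝ))) + (1 - Real.exp (-(α * (t.cost x : ℝ)))) / 2))) := by
    rw [Vt]
    apply Finset.sum_le_sum
    intro x _
    have hs := leafScore_mem (S := S) (f := f) hμ0 t x
    have he0 : (0:ℝ) < Real.exp (-(α * (t.cost x : ℝ))) := Real.exp_pos _
    have hx := hμ0 x
    nlinarith [hs.2, mul_nonneg hx (mul_pos (by norm_num : (0:ℝ) < 2)
      he0).le]
  have heq : ∑ x, (2 * μ x - 2 * (μ x * (leafScore S f μ t x *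
      Real.exp (-(α * (t.cost x : ℝ))) + (1 - Real.exp (-(α * (t.cost x : ℝ)))) / 2)))
      = 2 * (∑ x, μ x) - 2 * Wt S f μ α t := by
    rw [Finset.sum_sub_distrib, ← Finset.mul_sum, ← Finset.mul_sum, Wt]
  rw [heq, hμ1] at step
  linarith

lemma exp_pow_cost (α : ℝ) (c : ℕ) : (Real.exp (-α))^c = Real.exp (-(α * (c:ℝ))) := by
  rw [← Real.exp_nat_mul]
  congr 1
  ring

/-- The geometric-stopping construction: from any tree we obtain an algorithm with score
at least `Wt` and score-weighted cost at most `Vt / (1 - e^{-α})`. -/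
lemma stopped_exists (hμ0 : ∀ x, 0 ≤ μ x) (hμ1 : ∑ x, μ x = 1) {α : ℝ} (hα : 0 < α)
    (t : DTree (Fin m) Unit) :
    ∃ R : RandAlg (Fin m) Unit, Wt S f μ α t ≤ algScore S f μ R ∧
      algNum S f μ R ≤ Vt μ α t / (1 - Real.exp (-α)) := by
  set ρ := Real.exp (-α) with hρdef
  have hρ0 : 0 < ρ := Real.exp_pos _
  have hρ1 : ρ < 1 := by
    rw [hρdef, Real.exp_lt_one_iff]
    linarith
  have hρne : ρ ≠ 1 := ne_of_lt hρ1
  set cap := t.depth with hcap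
  refine ⟨mixAlg cap (gw ρ cap) (fun d => trunc d t)
      (fun d => gw_nonneg hρ0.le hρ1.le cap d) (gw_sum hρne cap), ?_, ?_⟩
  · rw [algScore_eq, mixAlg_F]
    have swap : ∑ d ∈ Finset.range (cap+1), gw ρ cap d * tSc S f μ (trunc d t)
        = ∑ x, ∑ d ∈ Finset.range (cap+1), gw ρ cap d * (μ x * leafScore S f μ (trunc d t) x) := by
      simp only [tSc, Finset.mul_sum]
      exact Finset.sum_comm
    rw [swap, Wt]
    apply Finset.sum_le_sum
    intro x _
    have hc : t.cost x ≤ cap := cost_le_depth t x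
    have hstep : ∑ d ∈ Finset.range (cap+1), gw ρ cap d * (μ x * leafScore S f μ (trunc d t) x)
        ≥ ∑ d ∈ Finset.range (cap+1), gw ρ cap d *
            (μ x * (if t.cost x ≤ d then leafScore S f μ t x else 1/2)) := by
      apply Finset.sum_le_sum
      intro d _
      apply mul_le_mul_of_nonneg_left _ (gw_nonneg hρ0.le hρ1.le cap d)
      apply mul_le_mul_of_nonneg_left _ (hμ0 x)
      by_cases hd : t.cost x ≤ d
      · rw [if_pos hd, trunc_leafScore d t x hd]
      · rw [if_neg hd]
        exact (leafScore_mem hμ0 (trunc d t) x).1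
    refine le_trans ?_ hstep
    have key : ∑ d ∈ Finset.range (cap+1), gw ρ cap d *
        (μ x * (if t.cost x ≤ d then leafScore S f μ t x else 1/2))
        = ρ^(t.cost x) * (μ x * leafScore S f μ t x) + (1 - ρ^(t.cost x)) * (μ x * (1/2)) := by
      have : ∀ d, μ x * (if t.cost x ≤ d then leafScore S f μ t x else 1/2)
          = if t.cost x ≤ d then μ x * leafScore S f μ t x else μ x * (1/2) := by
        intro d; split <;> rfl
      simp only [this]
      exact gw_ite hρne hc _ _
    rw [key, exp_pow_cost]
    apply le_of_eq
    ring
  · rw [algNum, mixAlg_F]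
    have swap : ∑ d ∈ Finset.range (cap+1), gw ρ cap d * tNum S f μ (trunc d t)
        = ∑ x, ∑ d ∈ Finset.range (cap+1), gw ρ cap d *
            (μ x * (leafScore S f μ (trunc d t) x * ((trunc d t).cost x : ℝ))) := by
      simp only [tNum, Finset.mul_sum]
      exact Finset.sum_comm
    rw [swap, Vt, Finset.sum_div]
    apply Finset.sum_le_sum
    intro x _
    have hc : t.cost x ≤ cap := cost_le_depth t x
    have hstep : ∑ d ∈ Finset.range (cap+1), gw ρ cap d *
        (μ x * (leafScore S f μ (trunc d t) x * ((trunc d t).cost x : ℝ)))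
        ≤ μ x * ∑ d ∈ Finset.range (cap+1), gw ρ cap d * ((min d (t.cost x) : ℕ) : ℝ) := by
      rw [Finset.mul_sum]
      apply Finset.sum_le_sum
      intro d _
      rw [show gw ρ cap d * (μ x * (leafScore S f μ (trunc d t) x * ((trunc d t).cost x : ℝ)))
          = μ x * (gw ρ cap d * (leafScore S f μ (trunc d t) x * ((trunc d t).cost x : ℝ))) by ring,
        show μ x * (gw ρ cap d * ((min d (t.cost x) : ℕ) : ℝ))
          = μ x * (gw ρ cap d * ((min d (t.cost x) : ℕ) : ℝ)) from rfl]
      apply mul_le_mul_of_nonneg_left _ (hμ0 x)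
      apply mul_le_mul_of_nonneg_left _ (gw_nonneg hρ0.le hρ1.le cap d)
      have h1 : leafScore S f μ (trunc d t) x ≤ 1 := (leafScore_mem hμ0 (trunc d t) x).2
      have h2 : ((trunc d t).cost x : ℝ) ≤ ((min d (t.cost x) : ℕ) : ℝ) := by
        exact_mod_cast trunc_cost_le d t x
      have h3 : (0:ℝ) ≤ ((trunc d t).cost x : ℝ) := Nat.cast_nonneg _
      nlinarith
    refine le_trans hstep ?_
    have := gw_min hρ0.le hρ1 hc
    have hx := hμ0 x
    have hrw : μ x * (1 - Real.exp (-(α * ((t.cost x : ℕ) : ℝ)))) / (1 - ρ)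
        = μ x * ((1 - ρ^(t.cost x)) / (1 - ρ)) := by
      rw [exp_pow_cost]
      ring
    rw [hrw]
    exact mul_le_mul_of_nonneg_left this hx

end Stopped

/-! ### the cost-of-score function B -/

section BFun

variable (S : ScoreFun) (f : (Fin m → Bool) → Bool) (μ : (Fin m → Bool) → ℝ)

noncomputable def Bf (x : ℝ) : ℝ :=
  sInf {b | ∃ R : RandAlg (Fin m) Unit, x ≤ algScore S f μ R ∧ algNum S f μ R = b}

variable {S f μ}

lemma Bset_nonempty (hμ0 : ∀ x, 0 ≤ μ x) (hμ1 : ∑ x, μ x = 1) {x : ℝ} (hx : x ≤ 1) :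
    {b | ∃ R : RandAlg (Fin m) Unit, x ≤ algScore S f μ R ∧ algNum S f μ R = b}.Nonempty := by
  refine ⟨algNum S f μ (oneAlg fullT), oneAlg fullT, ?_, rfl⟩
  rw [algScore_eq, oneAlg_F, tSc_fullT hμ0 hμ1]
  exact hx

lemma Bf_bddBelow (hμ0 : ∀ x, 0 ≤ μ x) (x : ℝ) :
    BddBelow {b | ∃ R : RandAlg (Fin m) Unit, x ≤ algScore S f μ R ∧ algNum S f μ R = b} := by
  refine ⟨0, ?_⟩
  rintro b ⟨R, _, rfl⟩
  exact algNum_nonneg hμ0 R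

lemma Bf_nonneg (hμ0 : ∀ x, 0 ≤ μ x) (hμ1 : ∑ x, μ x = 1) {x : ℝ} (hx : x ≤ 1) :
    0 ≤ Bf S f μ x :=
  le_csInf (Bset_nonempty hμ0 hμ1 hx) (by rintro b ⟨R, _, rfl⟩; exact algNum_nonneg hμ0 R)

lemma Bf_le (hμ0 : ∀ x, 0 ≤ μ x) {x : ℝ} (R : RandAlg (Fin m) Unit)
    (h : x ≤ algScore S f μ R) : Bf S f μ x ≤ algNum S f μ R :=
  csInf_le (Bf_bddBelow hμ0 x) ⟨R, h, rfl⟩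

lemma Bf_gamma0 (hμ0 : ∀ x, 0 ≤ μ x) (hμ1 : ∑ x, μ x = 1) :
    Bf S f μ (S.φ (mass μ {y | f y = true})) = 0 := by
  have h1 : Bf S f μ (S.φ (mass μ {y | f y = true})) ≤ 0 := by
    have := Bf_le (S := S) (f := f) hμ0 (oneAlg (DTree.leaf () : DTree (Fin m) Unit))
      (by rw [algScore_eq, oneAlg_F, tSc_leaf hμ1])
    rwa [algNum, oneAlg_F, tNum_leaf] at this
  have h2 := Bf_nonneg (S := S) (f := f) hμ0 hμ1
    (x := S.φ (mass μ {y | f y = true})) (gamma0_mem hμ0 hμ1).2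
  linarith

lemma Bf_exists_near (hμ0 : ∀ x, 0 ≤ μ x) (hμ1 : ∑ x, μ x = 1) {x : ℝ} (hx : x ≤ 1)
    {ε : ℝ} (hε : 0 < ε) :
    ∃ R : RandAlg (Fin m) Unit, x ≤ algScore S f μ R ∧
      algNum S f μ R < Bf S f μ x + ε := by
  obtain ⟨b, ⟨R, hR, rfl⟩, hb⟩ :=
    Real.lt_sInf_add_pos (Bset_nonempty hμ0 hμ1 hx) hε
  exact ⟨R, hR, hb⟩

/-- Convexity of `B`. -/
lemma Bf_convex3 (hμ0 : ∀ x, 0 ≤ μ x) (hμ1 : ∑ x, μ x = 1) {x₁ x₂ c : ℝ}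
    (hx₁ : x₁ ≤ 1) (hx₂ : x₂ ≤ 1) (hc0 : 0 ≤ c) (hc1 : c ≤ 1) :
    Bf S f μ (c * x₁ + (1-c) * x₂) ≤ c * Bf S f μ x₁ + (1-c) * Bf S f μ x₂ := by
  apply le_of_forall_pos_le_add
  intro ε hε
  obtain ⟨R₁, hR₁, hN₁⟩ := Bf_exists_near (S := S) (f := f) hμ0 hμ1 hx₁ (half_pos hε)
  obtain ⟨R₂, hR₂, hN₂⟩ := Bf_exists_near (S := S) (f := f) hμ0 hμ1 hx₂ (half_pos hε)
  have hSc : c * x₁ + (1-c) * x₂ ≤ algScore S f μ (mix2 R₁ R₂ c hc0 hc1) := by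
    rw [algScore_eq, mix2_F, ← algScore_eq, ← algScore_eq]
    have h1 : c * x₁ ≤ c * algScore S f μ R₁ := mul_le_mul_of_nonneg_left hR₁ hc0
    have h2 : (1-c) * x₂ ≤ (1-c) * algScore S f μ R₂ :=
      mul_le_mul_of_nonneg_left hR₂ (by linarith)
    linarith
  have hle := Bf_le (S := S) (f := f) hμ0 (mix2 R₁ R₂ c hc0 hc1) hSc
  have hNum : algNum S f μ (mix2 R₁ R₂ c hc0 hc1)
      = c * algNum S f μ R₁ + (1-c) * algNum S f μ R₂ := by
    rw [algNum, mix2_F, ← algNum, ← algNum]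
  rw [hNum] at hle
  have e1 : c * algNum S f μ R₁ ≤ c * (Bf S f μ x₁ + ε/2) :=
    mul_le_mul_of_nonneg_left hN₁.le hc0
  have e2 : (1-c) * algNum S f μ R₂ ≤ (1-c) * (Bf S f μ x₂ + ε/2) :=
    mul_le_mul_of_nonneg_left hN₂.le (by linarith)
  nlinarith

end BFun

end EL
namespace EL

open DTree Finset

variable {m : ℕ}

section Cases

variable {S : ScoreFun} {f : (Fin m → Bool) → Bool} {μ : (Fin m → Bool) → ℝ} {γ : ℝ}

/-- `sRdist ≤ 2 B(γ)`. -/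
lemma sRdist_le_two_Bf (hμ0 : ∀ x, 0 ≤ μ x) (hμ1 : ∑ x, μ x = 1)
    (hγl : S.φ (mass μ {y | f y = true}) ≤ γ) (hγ1 : γ ≤ 1) :
    sRdist S f μ γ ≤ 2 * Bf S f μ γ := by
  have hγpos : 0 < γ := by
    have := (gamma0_mem (S := S) (f := f) hμ0 hμ1).1
    linarith
  have hγhalf : 1/2 ≤ γ := by
    have := (gamma0_mem (S := S) (f := f) hμ0 hμ1).1
    linarith
  apply le_of_forall_pos_le_add
  intro ε hε
  obtain ⟨R, hR, hN⟩ := Bf_exists_near (S := S) (f := f) hμ0 hμ1 hγ1 (by linarith : 0 < ε/2)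
  have h1 : sRdist S f μ γ ≤ scost S f μ R := sRdist_le (γ := γ) hμ0 R hR
  have h2 : scost S f μ R ≤ algNum S f μ R / γ := by
    rw [scost_eq']
    exact div_le_div_of_nonneg_left (algNum_nonneg hμ0 R) hγpos hR
  have h3 : algNum S f μ R / γ ≤ 2 * algNum S f μ R := by
    rw [div_le_iff₀ hγpos]
    nlinarith [algNum_nonneg (S := S) (f := f) hμ0 R]
  have h4 : 2 * algNum S f μ R ≤ 2 * Bf S f μ γ + ε := by nlinarith
  linarith

lemma case0 (hμ0 : ∀ x, 0 ≤ μ x) (hμ1 : ∑ x, μ x = 1)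
    (hγ : γ ≤ S.φ (mass μ {y | f y = true})) (hγl : S.φ (mass μ {y | f y = true}) ≤ γ) :
    ∃ α : ℝ, 0 < α ∧ sRdist S f μ γ ≤ (8 / α) * Real.log (γ / DS S f μ α) := by
  refine ⟨1, one_pos, ?_⟩
  have hγ0 := gamma0_mem (S := S) (f := f) hμ0 hμ1
  have hT : sRdist S f μ γ ≤ 0 := by
    have h := sRdist_le (γ := γ) hμ0 (oneAlg (DTree.leaf () : DTree (Fin m) Unit))
      (by rw [algScore_eq, oneAlg_F, tSc_leaf hμ1]; exact hγ)
    rwa [scost_eq', algNum, oneAlg_F, tNum_leaf, zero_div] at h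
  have hDSle : DS S f μ 1 ≤ S.φ (mass μ {y | f y = true}) := by
    apply DS_le
    intro t
    refine le_trans (tDsc_le_max hμ0 hμ1 zero_le_one t) ?_
    apply max_le le_rfl
    have h2e : (2:ℝ) < Real.exp 1 := by
      have := Real.exp_one_gt_d9
      linarith
    have : Real.exp (-1) < 1/2 := by
      rw [Real.exp_neg]
      rw [inv_lt_comm₀ (by linarith) (by norm_num)]
      simpa using h2e
    linarith [hγ0.1]
  have hDSpos : 0 < DS S f μ 1 := DS_pos hμ0 hμ1 zero_le_one
  have hlog : 0 ≤ Real.log (γ / DS S f μ 1) := by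
    apply Real.log_nonneg
    rw [le_div_iff₀ hDSpos, one_mul]
    linarith
  calc sRdist S f μ γ ≤ 0 := hT
    _ ≤ (8 / 1) * Real.log (γ / DS S f μ 1) := by positivity

end Cases

end EL
namespace EL

open DTree Finset

variable {m : ℕ}

section CaseB

variable {S : ScoreFun} {f : (Fin m → Bool) → Bool} {μ : (Fin m → Bool) → ℝ} {γ : ℝ}

lemma log_ratio_ge (a b : ℝ) (ha : 0 < a) (hb : 0 < b) : 1 - b/a ≤ Real.log (a/b) := by
  have h1 : Real.log (b/a) ≤ b/a - 1 := Real.log_le_sub_one_of_pos (div_pos hb ha)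
  have h2 : Real.log (a/b) = - Real.log (b/a) := by
    rw [← Real.log_inv, inv_div]
  linarith [h2 ▸ (neg_le_neg h1 : -(b/a - 1) ≤ -Real.log (b/a))]

set_option maxHeartbeats 2000000 in
/-- The main case: `γ₀ < γ < 1`. -/
lemma caseB (hμ0 : ∀ x, 0 ≤ μ x) (hμ1 : ∑ x, μ x = 1)
    (hγl : S.φ (mass μ {y | f y = true}) < γ) (hγ1 : γ < 1) :
    ∃ α : ℝ, 0 < α ∧ sRdist S f μ γ ≤ (8 / α) * Real.log (γ / DS S f μ α) := by
  set g0 := S.φ (mass μ {y | f y = true}) with hg0def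
  clear_value g0
  have hg0 := gamma0_mem (S := S) (f := f) hμ0 hμ1
  have hγpos : 0 < γ := by
    have := hg0.1
    rw [← hg0def] at this
    linarith
  set D := Bf S f μ γ with hDdef
  clear_value D
  have hD0 : 0 ≤ D := by rw [hDdef]; exact Bf_nonneg hμ0 hμ1 hγ1.le
  have hT2D : sRdist S f μ γ ≤ 2 * D := by
    rw [hDdef]
    exact sRdist_le_two_Bf hμ0 hμ1 (by rw [← hg0def]; exact hγl.le) hγ1.le
  -- three-point convexity (chord) inequality
  have chord3 : ∀ x y : ℝ, x < γ → γ < y → y ≤ 1 →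
      (D - Bf S f μ x) * (y - γ) ≤ (Bf S f μ y - D) * (γ - x) := by
    intro x y hx hy hy1
    have hx1 : x ≤ 1 := by linarith
    have hyx : 0 < y - x := by linarith
    set c := (y - γ)/(y - x) with hcdef
    have hc0 : 0 ≤ c := div_nonneg (by linarith) hyx.le
    have hc1 : c ≤ 1 := by
      rw [hcdef, div_le_one hyx]; linarith
    have hlev : c * x + (1 - c) * y = γ := by
      rw [hcdef]; field_simp; ring
    have hconv := Bf_convex3 (S := S) (f := f) hμ0 hμ1 hx1 hy1 hc0 hc1
    rw [hlev] at hconv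
    have hmul := mul_le_mul_of_nonneg_right hconv hyx.le
    have hc_mul : c * (y - x) = y - γ := by
      rw [hcdef]; field_simp
    have h1c_mul : (1 - c) * (y - x) = γ - x := by
      have : (1 - c) * (y - x) = (y - x) - c * (y-x) := by ring
      rw [this, hc_mul]; ring
    have expand : (c * Bf S f μ x + (1 - c) * Bf S f μ y) * (y - x)
        = Bf S f μ x * (c * (y - x)) + Bf S f μ y * ((1 - c) * (y - x)) := by ring
    rw [expand, hc_mul, h1c_mul] at hmul
    nlinarith [hmul]
  -- the supporting slope at γ
  set Sls := (fun x => (D - Bf S f μ x)/(γ - x)) '' Set.Iio γ with hSlsdef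
  have hγlSls : g0 ∈ Set.Iio γ := by rw [Set.mem_Iio]; exact hγl
  have hSlsne : Sls.Nonempty := ⟨_, Set.mem_image_of_mem _ hγlSls⟩
  set xp := (1 + γ)/2 with hxpdef
  have hxp1 : γ < xp := by rw [hxpdef]; linarith
  have hxp2 : xp ≤ 1 := by rw [hxpdef]; linarith
  have hSlsbdd : BddAbove Sls := by
    refine ⟨(Bf S f μ xp - D)/(xp - γ), ?_⟩
    rintro s ⟨x, hx, rfl⟩
    rw [Set.mem_Iio] at hx
    have h3 := chord3 x xp hx hxp1 hxp2
    rw [div_le_div_iff₀ (by linarith) (by linarith)]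
    nlinarith [h3]
  set σ := sSup Sls with hσdef
  clear_value σ
  have hσγ0 : D / (γ - g0) ≤ σ := by
    have hmem : (D - Bf S f μ g0)/(γ - g0) ∈ Sls := Set.mem_image_of_mem _ hγlSls
    have hBg0 : Bf S f μ g0 = 0 := by rw [hg0def]; exact Bf_gamma0 hμ0 hμ1
    have h2 := le_csSup hSlsbdd hmem
    rw [hBg0, sub_zero] at h2
    rw [hσdef]
    exact h2
  -- global minorant line
  have minor : ∀ w : ℝ, w ≤ 1 → D + σ * (w - γ) ≤ Bf S f μ w := by
    intro w hw1
    rcases lt_trichotomy w γ with hw | hw | hw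
    · have hmem : (D - Bf S f μ w)/(γ - w) ∈ Sls := Set.mem_image_of_mem _ hw
      have hle := le_csSup hSlsbdd hmem
      rw [div_le_iff₀ (by linarith : (0:ℝ) < γ - w)] at hle
      nlinarith [hle]
    · rw [hw]; simp [hDdef]
    · have hle : σ ≤ (Bf S f μ w - D)/(w - γ) := by
        rw [hσdef]
        apply csSup_le hSlsne
        rintro s ⟨x, hx, rfl⟩
        rw [Set.mem_Iio] at hx
        have h3 := chord3 x w hx hw hw1
        rw [div_le_div_iff₀ (by linarith) (by linarith)]
        nlinarith [h3]
      rw [le_div_iff₀ (by linarith : (0:ℝ) < w - γ)] at hle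
      linarith
  rcases le_or_gt σ 4 with hσ4 | hσ4
  -- small slope: B(γ) ≤ 4(γ - γ₀), use α = ln(1/γ₀)
  · have hD4 : D ≤ 4 * (γ - g0) := by
      rw [div_le_iff₀ (by linarith : (0:ℝ) < γ - g0)] at hσγ0
      nlinarith
    have hg0pos : (0:ℝ) < g0 := by
      have := hg0.1; rw [← hg0def] at this; linarith
    have hg0lt1 : g0 < 1 := by linarith
    have hα : 0 < -Real.log g0 := by
      have := Real.log_neg hg0pos hg0lt1
      linarith
    refine ⟨-Real.log g0, hα, ?_⟩
    set α := -Real.log g0 with hαdef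
    clear_value α
    have hexp : Real.exp (-α) = g0 := by
      rw [hαdef, neg_neg, Real.exp_log hg0pos]
    have hα1 : α ≤ 1 := by
      have h1 : Real.log (1/g0) ≤ 1/g0 - 1 := Real.log_le_sub_one_of_pos (by positivity)
      have h2 : Real.log (1/g0) = -Real.log g0 := by rw [one_div, Real.log_inv]
      have h3 : 1/g0 ≤ 2 := by
        rw [div_le_iff₀ hg0pos]
        have := hg0.1; rw [← hg0def] at this; linarith
      rw [hαdef]; linarith
    have hDSle : DS S f μ α ≤ g0 := by
      apply DS_le
      intro t
      refine le_trans (tDsc_le_max hμ0 hμ1 hα.le t) ?_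
      rw [hg0def] at hexp ⊢
      rw [hexp]
      exact le_of_eq (max_self _)
    have hDSpos : 0 < DS S f μ α := DS_pos hμ0 hμ1 hα.le
    have hlog1 : Real.log (γ/g0) ≤ Real.log (γ / DS S f μ α) :=
      Real.log_le_log (by positivity) (div_le_div_of_nonneg_left hγpos.le hDSpos hDSle)
    have hlog2 : γ - g0 ≤ Real.log (γ/g0) := by
      have h := log_ratio_ge γ g0 hγpos hg0pos
      have he : 1 - g0/γ = (γ - g0)/γ := by field_simp
      have h4 : γ - g0 ≤ (γ - g0)/γ := by
        rw [le_div_iff₀ hγpos]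
        nlinarith
      linarith [he ▸ h]
    have hlognn : 0 ≤ Real.log (γ / DS S f μ α) := by linarith
    have h8 : (8:ℝ) ≤ 8/α := by
      rw [le_div_iff₀ hα]
      nlinarith
    calc sRdist S f μ γ ≤ 2 * D := hT2D
      _ ≤ 8 * (γ - g0) := by linarith
      _ ≤ 8 * Real.log (γ / DS S f μ α) := by nlinarith
      _ ≤ (8/α) * Real.log (γ / DS S f μ α) := mul_le_mul_of_nonneg_right h8 hlognn
  -- main branch: steep slope, use α = ln(σ/(σ-2))
  · have hσ0 : (0:ℝ) < σ := by linarith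
    have hσ2 : (0:ℝ) < σ - 2 := by linarith
    set u := σ / (σ - 2) with hudef
    clear_value u
    have hu0 : 0 < u := by rw [hudef]; positivity
    have hu1 : 1 < u := by
      rw [hudef, lt_div_iff₀ hσ2]; linarith
    set α := Real.log u with hαdef
    clear_value α
    have hα : 0 < α := by rw [hαdef]; exact Real.log_pos hu1
    refine ⟨α, hα, ?_⟩
    have hexp : Real.exp (-α) = (σ - 2)/σ := by
      rw [hαdef, Real.exp_neg, Real.exp_log hu0, hudef, inv_div]
    have h1me : 1 - Real.exp (-α) = 2/σ := by
      rw [hexp]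
      field_simp
      ring
    have key : ∀ t : DTree (Fin m) Unit, tDsc S f μ α t ≤ γ - D/σ := by
      intro t
      obtain ⟨R, hW, hNum⟩ := stopped_exists hμ0 hμ1 hα t
      obtain ⟨W, hWdef⟩ : ∃ W, Wt S f μ α t = W := ⟨_, rfl⟩
      obtain ⟨V, hVdef⟩ : ∃ V, Vt μ α t = V := ⟨_, rfl⟩
      rw [hWdef] at hW
      have hBW : Bf S f μ W ≤ σ * V / 2 := by
        have h1 : Bf S f μ W ≤ algNum S f μ R := Bf_le hμ0 R hW
        rw [hVdef] at hNum
        have h2 : V / (1 - Real.exp (-α)) = σ * V / 2 := by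
          rw [h1me, div_div_eq_mul_div]
          ring
        rw [h2] at hNum
        exact le_trans h1 hNum
      have hmin : D + σ * (W - γ) ≤ Bf S f μ W := by
        rw [← hWdef]
        exact minor (Wt S f μ α t) (Wt_le_one hμ0 hμ1 hα.le t)
      rw [tDsc_eq_Wt_sub, hWdef, hVdef]

      have hDσ : D/σ ≤ γ - (W - V / 2) := by
        rw [div_le_iff₀ hσ0]
        nlinarith [hmin, hBW]
      linarith
    have hDSle : DS S f μ α ≤ γ - D/σ := DS_le key
    have hDSpos : 0 < DS S f μ α := DS_pos hμ0 hμ1 hα.le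
    have hsub : 0 < γ - D/σ := lt_of_lt_of_le hDSpos hDSle
    have hlog1 : Real.log (γ/(γ - D/σ)) ≤ Real.log (γ / DS S f μ α) :=
      Real.log_le_log (by positivity) (div_le_div_of_nonneg_left hγpos.le hDSpos hDSle)
    have hlog2 : D/σ ≤ Real.log (γ/(γ - D/σ)) := by
      have h := log_ratio_ge γ (γ - D/σ) hγpos hsub
      have he : 1 - (γ - D/σ)/γ = (D/σ)/γ := by field_simp; ring
      have h2 : D/σ ≤ (D/σ)/γ := by
        have hDσ0 : 0 ≤ D/σ := by positivity
        rw [le_div_iff₀ hγpos]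
        nlinarith
      linarith [he ▸ h]
    have hασ : α * σ ≤ 4 := by
      have h1 : α ≤ u - 1 := by
        rw [hαdef]
        exact Real.log_le_sub_one_of_pos hu0
      have h2 : u - 1 = 2/(σ-2) := by
        rw [hudef]; field_simp; ring
      have h3 : α ≤ 2/(σ-2) := by
        rw [h2] at h1; exact h1
      have h4 : α * σ ≤ (2/(σ-2)) * σ := mul_le_mul_of_nonneg_right h3 hσ0.le
      have h5 : (2/(σ-2)) * σ ≤ 4 := by
        rw [div_mul_eq_mul_div, div_le_iff₀ hσ2]
        nlinarith
      linarith
    have hlogDσ : D/σ ≤ Real.log (γ / DS S f μ α) := le_trans hlog2 hlog1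
    have hfinal : 2 * D ≤ (8/α) * (D/σ) := by
      have heq : (8/α) * (D/σ) = 8*D/(α*σ) := by
        field_simp
      rw [heq, le_div_iff₀ (mul_pos hα hσ0)]
      have hmul : 2*D*(α*σ) ≤ 2*D*4 :=
        mul_le_mul_of_nonneg_left hασ (by linarith)
      linarith
    calc sRdist S f μ γ ≤ 2 * D := hT2D
      _ ≤ (8/α) * (D/σ) := hfinal
      _ ≤ (8/α) * Real.log (γ / DS S f μ α) :=
          mul_le_mul_of_nonneg_left hlogDσ (by positivity)

end CaseB

end EL
namespace EL

open DTree Finset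

variable {m : ℕ}

/-! ### cubes -/

def cubeSet (ρ : Fin m → Option Bool) : Set (Fin m → Bool) :=
  {y | ∀ i b, ρ i = some b → y i = b}

def allNone : Fin m → Option Bool := fun _ => none

lemma cubeSet_allNone : cubeSet (allNone : Fin m → Option Bool) = Set.univ := by
  ext y; simp [cubeSet, allNone]

lemma cubeSet_update (ρ : Fin m → Option Bool) (i : Fin m) (c : Bool)
    (hc : ∀ b, ρ i = some b → b = c) :
    cubeSet (Function.update ρ i (some c)) = cubeSet ρ ∩ {y | y i = c} := by
  ext y
  simp only [cubeSet, Set.mem_setOf_eq, Set.mem_inter_iff]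
  constructor
  · intro h
    refine ⟨?_, h i c (by rw [Function.update_self])⟩
    intro j b hj
    by_cases hji : j = i
    · subst hji
      have hbc : b = c := hc b hj
      subst hbc
      exact h j b (by rw [Function.update_self, hc b hj])
    · exact h j b (by rw [Function.update_of_ne hji]; exact hj)
  · rintro ⟨h1, h2⟩ j b hj
    by_cases hji : j = i
    · subst hji
      rw [Function.update_self] at hj
      have : c = b := Option.some.inj hj
      rw [← this]
      exact h2
    · rw [Function.update_of_ne hji] at hj
      exact h1 j b hj

lemma mem_leafSet_self (t : DTree (Fin m) Unit) (x : Fin m → Bool) : x ∈ t.leafSet x := by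
  induction t with
  | leaf l => exact Set.mem_univ x
  | node i a b iha ihb =>
    rw [DTree.leafSet]
    by_cases h : x i
    · rw [if_pos h]; exact ⟨rfl, ihb⟩
    · rw [if_neg h]; exact ⟨rfl, iha⟩

/-- Every leaf set is a subcube. -/
lemma leafSet_is_cube (t : DTree (Fin m) Unit) (x : Fin m → Bool) :
    ∃ ρ : Fin m → Option Bool, t.leafSet x = cubeSet ρ := by
  induction t with
  | leaf l =>
    exact ⟨allNone, by rw [DTree.leafSet, cubeSet_allNone]⟩
  | node i a b iha ihb =>
    rw [DTree.leafSet]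
    by_cases h : x i
    · obtain ⟨ρ, hρ⟩ := ihb
      have hx : x ∈ cubeSet ρ := hρ ▸ mem_leafSet_self b x
      refine ⟨Function.update ρ i (some (x i)), ?_⟩
      rw [if_pos h, hρ, cubeSet_update ρ i (x i) (fun b hb => (hx i b hb).symm)]
      rw [Set.inter_comm]
    · obtain ⟨ρ, hρ⟩ := iha
      have hx : x ∈ cubeSet ρ := hρ ▸ mem_leafSet_self a x
      refine ⟨Function.update ρ i (some (x i)), ?_⟩
      rw [if_neg h, hρ, cubeSet_update ρ i (x i) (fun b hb => (hx i b hb).symm)]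
      rw [Set.inter_comm]

/-! ### scores of sets, the purity gap -/

noncomputable def scoreOf (S : ScoreFun) (f : (Fin m → Bool) → Bool)
    (μ : (Fin m → Bool) → ℝ) (A : Set (Fin m → Bool)) : ℝ :=
  S.φ (mass μ (A ∩ {y | f y = true}) / mass μ A)

lemma leafScore_eq_scoreOf (S : ScoreFun) (f : (Fin m → Bool) → Bool)
    (μ : (Fin m → Bool) → ℝ) (t : DTree (Fin m) Unit) (x : Fin m → Bool) :
    leafScore S f μ t x = scoreOf S f μ (t.leafSet x) := rfl

section Gap

variable (S : ScoreFun) (f : (Fin m → Bool) → Bool) (μ : (Fin m → Bool) → ℝ)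

open Classical in
noncomputable def gapδ : ℝ :=
  Finset.univ.inf' (Finset.univ_nonempty (α := Fin m → Option Bool))
    (fun ρ => if scoreOf S f μ (cubeSet ρ) = 1 then 1 else 1 - scoreOf S f μ (cubeSet ρ))

variable {S f μ}

lemma scoreOf_mem (hμ0 : ∀ x, 0 ≤ μ x) (A : Set (Fin m → Bool)) :
    scoreOf S f μ A ∈ Set.Icc (1/2 : ℝ) 1 := by
  have h := bias_mem (μ := μ) hμ0 A {y | f y = true}
  exact ⟨S.half_le _ h, S.le_one _ h⟩

lemma gapδ_pos (hμ0 : ∀ x, 0 ≤ μ x) : 0 < gapδ S f μ (m := m) := by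
  rw [gapδ, Finset.lt_inf'_iff]
  intro ρ _
  split
  · norm_num
  · rename_i hne
    have := (scoreOf_mem (S := S) (f := f) hμ0 (cubeSet ρ)).2
    cases lt_or_eq_of_le this with
    | inl h => linarith
    | inr h => exact absurd h hne

lemma gapδ_le_one (hμ0 : ∀ x, 0 ≤ μ x) : gapδ S f μ (m := m) ≤ 1 := by
  rw [gapδ]
  refine le_trans (Finset.inf'_le _ (Finset.mem_univ allNone)) ?_
  split
  · exact le_refl 1
  · have := (scoreOf_mem (S := S) (f := f) hμ0 (cubeSet (allNone : Fin m → Option Bool))).1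
    linarith

/-- The purity gap: any impure leaf loses at least `gapδ` in score. -/
lemma gapδ_le_impure (hμ0 : ∀ x, 0 ≤ μ x) (t : DTree (Fin m) Unit) (x : Fin m → Bool)
    (h : leafScore S f μ t x ≠ 1) :
    gapδ S f μ (m := m) ≤ 1 - leafScore S f μ t x := by
  obtain ⟨ρ, hρ⟩ := leafSet_is_cube t x
  have hsc : leafScore S f μ t x = scoreOf S f μ (cubeSet ρ) := by
    rw [leafScore_eq_scoreOf, hρ]
  rw [hsc] at h ⊢
  rw [gapδ]
  refine le_trans (Finset.inf'_le _ (Finset.mem_univ ρ)) ?_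
  rw [if_neg h]

end Gap

end EL
namespace EL

open DTree Finset

variable {m : ℕ}

open Classical in
noncomputable def cImp (S : ScoreFun) (f : (Fin m → Bool) → Bool) (μ : (Fin m → Bool) → ℝ) :
    (Fin m → Option Bool) → DTree (Fin m) Unit → DTree (Fin m) Unit
  | ρ, .leaf l => if scoreOf S f μ (cubeSet ρ) = 1 then .leaf l else fullT
  | ρ, .node i a b =>
      .node i (cImp S f μ (Function.update ρ i (some false)) a)
        (cImp S f μ (Function.update ρ i (some true)) b)

section CImp

variable {S : ScoreFun} {f : (Fin m → Bool) → Bool} {μ : (Fin m → Bool) → ℝ}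

open Classical in
lemma cImp_rec (hμ0 : ∀ x, 0 ≤ μ x) (t : DTree (Fin m) Unit) :
    ∀ (ρ : Fin m → Option Bool) (x : Fin m → Bool), x ∈ cubeSet ρ →
    ((cubeSet ρ ∩ (cImp S f μ ρ t).leafSet x = {x}) ∨
      (∃ ρf, cubeSet ρ ∩ (cImp S f μ ρ t).leafSet x = cubeSet ρf ∧
        scoreOf S f μ (cubeSet ρf) = 1))
    ∧ (cImp S f μ ρ t).cost x ≤ t.cost x +
        m * (if scoreOf S f μ (cubeSet ρ ∩ t.leafSet x) = 1 then 0 else 1) := by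
  induction t with
  | leaf l =>
    intro ρ x hx
    rw [show cImp S f μ ρ (DTree.leaf l) =
      (if scoreOf S f μ (cubeSet ρ) = 1 then DTree.leaf l else fullT) from rfl]
    by_cases hpure : scoreOf S f μ (cubeSet ρ) = 1
    · rw [if_pos hpure]
      constructor
      · right
        refine ⟨ρ, ?_, hpure⟩
        rw [DTree.leafSet, Set.inter_univ]
      · rw [DTree.leafSet, Set.inter_univ, if_pos hpure, DTree.cost]
        omega
    · rw [if_neg hpure]
      constructor
      · left
        rw [fullT_leafSet]
        exact Set.inter_eq_self_of_subset_right (Set.singleton_subset_iff.mpr hx)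
      · rw [DTree.leafSet, Set.inter_univ, if_neg hpure, fullT_cost, DTree.cost]
        omega
  | node i a b iha ihb =>
    intro ρ x hx
    have hupd : cubeSet (Function.update ρ i (some (x i))) = cubeSet ρ ∩ {y | y i = x i} :=
      cubeSet_update ρ i (x i) (fun c hc => (hx i c hc).symm)
    have hx' : x ∈ cubeSet (Function.update ρ i (some (x i))) := by
      rw [hupd]; exact ⟨hx, rfl⟩
    by_cases hxi : x i
    · have hxieq : some (x i) = some true := by rw [hxi]
      have IH := ihb (Function.update ρ i (some true)) x (by rw [← hxieq]; exact hx')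
      have hset : ∀ Z : Set (Fin m → Bool),
          cubeSet ρ ∩ ({y | y i = x i} ∩ Z) = cubeSet (Function.update ρ i (some true)) ∩ Z := by
        intro Z
        rw [← Set.inter_assoc, ← hupd, hxieq]
      constructor
      · rw [show cImp S f μ ρ (DTree.node i a b) =
          DTree.node i (cImp S f μ (Function.update ρ i (some false)) a)
            (cImp S f μ (Function.update ρ i (some true)) b) from rfl]
        rw [DTree.leafSet, if_pos hxi, hset]
        exact IH.1
      · rw [show cImp S f μ ρ (DTree.node i a b) =
          DTree.node i (cImp S f μ (Function.update ρ i (some false)) a)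
            (cImp S f μ (Function.update ρ i (some true)) b) from rfl]
        rw [DTree.cost, if_pos hxi, DTree.cost, if_pos hxi,
          DTree.leafSet, if_pos hxi, hset]
        omega
    · have hxieq : some (x i) = some false := by
        rw [show x i = false from Bool.eq_false_iff.mpr hxi]
      have IH := iha (Function.update ρ i (some false)) x (by rw [← hxieq]; exact hx')
      have hset : ∀ Z : Set (Fin m → Bool),
          cubeSet ρ ∩ ({y | y i = x i} ∩ Z) = cubeSet (Function.update ρ i (some false)) ∩ Z := by
        intro Z
        rw [← Set.inter_assoc, ← hupd, hxieq]
      constructor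
      · rw [show cImp S f μ ρ (DTree.node i a b) =
          DTree.node i (cImp S f μ (Function.update ρ i (some false)) a)
            (cImp S f μ (Function.update ρ i (some true)) b) from rfl]
        rw [DTree.leafSet, if_neg hxi, hset]
        exact IH.1
      · rw [show cImp S f μ ρ (DTree.node i a b) =
          DTree.node i (cImp S f μ (Function.update ρ i (some false)) a)
            (cImp S f μ (Function.update ρ i (some true)) b) from rfl]
        rw [DTree.cost, if_neg hxi, DTree.cost, if_neg hxi,
          DTree.leafSet, if_neg hxi, hset]
        omega

lemma mem_cubeSet_allNone (x : Fin m → Bool) : x ∈ cubeSet (allNone : Fin m → Option Bool) := by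
  intro i b hb
  simp [allNone] at hb

lemma cImp_score_one (hμ0 : ∀ x, 0 ≤ μ x) (t : DTree (Fin m) Unit) (x : Fin m → Bool) :
    leafScore S f μ (cImp S f μ allNone t) x = 1 := by
  have h := (cImp_rec (S := S) (f := f) hμ0 t allNone x (mem_cubeSet_allNone x)).1
  rw [cubeSet_allNone, Set.univ_inter] at h
  rcases h with h | ⟨ρf, hρf, hsc⟩
  · exact leafScore_of_singleton hμ0 _ x h
  · rw [leafScore_eq_scoreOf, hρf, hsc]

open Classical in
lemma cImp_cost_le (hμ0 : ∀ x, 0 ≤ μ x) (t : DTree (Fin m) Unit) (x : Fin m → Bool) :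
    (cImp S f μ allNone t).cost x ≤ t.cost x +
      m * (if leafScore S f μ t x = 1 then 0 else 1) := by
  have h := (cImp_rec (S := S) (f := f) hμ0 t allNone x (mem_cubeSet_allNone x)).2
  rw [cubeSet_allNone, Set.univ_inter] at h
  rw [leafScore_eq_scoreOf]
  exact h

end CImp

end EL
namespace EL

open DTree Finset

variable {m : ℕ}

section CaseA

variable {S : ScoreFun} {f : (Fin m → Bool) → Bool} {μ : (Fin m → Bool) → ℝ}

lemma exists_tree_dScore_le (R : RandAlg (Fin m) Unit) (α : ℝ) :
    ∃ j, dScore S f μ α R ≤ tDsc S f μ α (R.T j) := by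
  by_contra h
  push_neg at h
  obtain ⟨j₀, _, hj₀⟩ := Finset.exists_ne_zero_of_sum_ne_zero
    (by rw [R.p_sum]; exact one_ne_zero : ∑ j ∈ Finset.univ, R.p j ≠ 0)
  have hlt : ∑ j, R.p j * tDsc S f μ α (R.T j) < ∑ j, R.p j * dScore S f μ α R := by
    apply Finset.sum_lt_sum
    · intro j _
      exact mul_le_mul_of_nonneg_left (h j).le (R.p_nonneg j)
    · exact ⟨j₀, Finset.mem_univ _, mul_lt_mul_of_pos_left (h j₀)
        (lt_of_le_of_ne (R.p_nonneg j₀) (Ne.symm hj₀))⟩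
  rw [← dScore_eq, ← Finset.sum_mul, R.p_sum, one_mul] at hlt
  exact lt_irrefl _ hlt

lemma half_beta_le {β : ℝ} (hβ : 0 < β) (hβ1 : β ≤ 1) : β/2 ≤ 1 - Real.exp (-β) := by
  have h1 : β + 1 ≤ Real.exp β := Real.add_one_le_exp β
  have h2 : Real.exp (-β) = 1 / Real.exp β := by
    rw [Real.exp_neg, one_div]
  have h3 : Real.exp (-β) ≤ 1/(1+β) := by
    rw [h2]
    exact div_le_div_of_nonneg_left zero_le_one (by linarith) (by linarith)
  have h4 : 1/(1+β) ≤ 1 - β/2 := by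
    rw [div_le_iff₀ (by linarith : (0:ℝ) < 1 + β)]
    nlinarith
  linarith

open Classical in
set_option maxHeartbeats 4000000 in
lemma caseA (hμ0 : ∀ x, 0 ≤ μ x) (hμ1 : ∑ x, μ x = 1) :
    ∃ α : ℝ, 0 < α ∧ sRdist S f μ 1 ≤ (8 / α) * Real.log (1 / DS S f μ α) := by
  have hδpos : 0 < gapδ S f μ (m := m) := gapδ_pos hμ0
  have hδ1 : gapδ S f μ (m := m) ≤ 1 := gapδ_le_one hμ0
  obtain ⟨δ, hδdef⟩ : ∃ d, gapδ S f μ (m := m) = d := ⟨_, rfl⟩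
  rw [hδdef] at hδpos hδ1
  have hm1 : (0:ℝ) < (m:ℝ) + 1 := by positivity
  obtain ⟨β, hβdef⟩ : ∃ b, δ/((m:ℝ)+1) = b := ⟨_, rfl⟩
  have hβpos : 0 < β := by rw [← hβdef]; exact div_pos hδpos hm1
  have hβ1 : β ≤ 1 := by
    rw [← hβdef, div_le_one hm1]
    have : (0:ℝ) ≤ (m:ℝ) := Nat.cast_nonneg m
    linarith
  refine ⟨β, hβpos, ?_⟩
  have h7 : 4/β + (m:ℝ)/δ + 2*(m:ℝ) ≤ 7/β := by
    rw [← hβdef]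
    have e1 : (7:ℝ)/(δ/((m:ℝ)+1)) = 7*((m:ℝ)+1)/δ := by
      rw [div_div_eq_mul_div]
    have e2 : (4:ℝ)/(δ/((m:ℝ)+1)) = 4*((m:ℝ)+1)/δ := by
      rw [div_div_eq_mul_div]
    rw [e1, e2]
    have hm0 : (0:ℝ) ≤ (m:ℝ) := Nat.cast_nonneg m
    have hfs : 7*((m:ℝ)+1)/δ - (4*((m:ℝ)+1)/δ + (m:ℝ)/δ + 2*(m:ℝ))
        = (3*((m:ℝ)+1) - (m:ℝ) - 2*(m:ℝ)*δ)/δ := by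
      field_simp
      ring
    have hnum : 0 ≤ 3*((m:ℝ)+1) - (m:ℝ) - 2*(m:ℝ)*δ := by nlinarith
    have : 0 ≤ (3*((m:ℝ)+1) - (m:ℝ) - 2*(m:ℝ)*δ)/δ := div_nonneg hnum hδpos.le
    linarith
  have hmain : sRdist S f μ 1 ≤ (7/β) * (1 - DS S f μ β) := by
    apply le_of_forall_pos_le_add
    intro κ hκ
    have hlt' : DS S f μ β - (β/7) * κ <
        ⨆ R : RandAlg (Fin m) Unit, dScore S f μ β R := by
      have : 0 < (β/7) * κ := by positivity
      have hh : DS S f μ β - (β/7) * κ < DS S f μ β := by linarith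
      exact hh
    obtain ⟨R0, hR0⟩ := exists_lt_of_lt_ciSup hlt'
    obtain ⟨j, hj⟩ := exists_tree_dScore_le (S := S) (f := f) (μ := μ) R0 β
    obtain ⟨t, htdef⟩ : ∃ t, R0.T j = t := ⟨_, rfl⟩
    rw [htdef] at hj
    have hG : DS S f μ β - (β/7) * κ < tDsc S f μ β t := lt_of_lt_of_le hR0 hj
    have hG1 : tDsc S f μ β t ≤ 1 := tDsc_le_one hμ0 hμ1 hβpos.le t
    set ρ := Real.exp (-β) with hρdef
    have hρ0 : 0 < ρ := Real.exp_pos _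
    have hρ1 : ρ < 1 := by
      rw [hρdef, Real.exp_lt_one_iff]; linarith
    have hρne : ρ ≠ 1 := ne_of_lt hρ1
    have h1ρ : β/2 ≤ 1 - ρ := by rw [hρdef]; exact half_beta_le hβpos hβ1
    have h1ρpos : 0 < 1 - ρ := by linarith
    set cap := t.depth with hcap
    set Rc := mixAlg cap (gw ρ cap) (fun d => cImp S f μ allNone (trunc d t))
      (fun d => gw_nonneg hρ0.le hρ1.le cap d) (gw_sum hρne cap) with hRcdef
    have hSc : algScore S f μ Rc = 1 := by
      rw [hRcdef, algScore_eq, mixAlg_F]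
      have htsc : ∀ d ∈ Finset.range (cap+1),
          gw ρ cap d * tSc S f μ (cImp S f μ allNone (trunc d t)) = gw ρ cap d := by
        intro d _
        have h1 : tSc S f μ (cImp S f μ allNone (trunc d t)) = 1 := by
          rw [tSc]
          have hone : ∀ x ∈ (Finset.univ : Finset (Fin m → Bool)),
              μ x * leafScore S f μ (cImp S f μ allNone (trunc d t)) x = μ x := by
            intro x _
            rw [cImp_score_one hμ0, mul_one]
          rw [Finset.sum_congr rfl hone, hμ1]
        rw [h1, mul_one]
      rw [Finset.sum_congr rfl htsc, gw_sum hρne]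
    have hstep : ∀ (d : ℕ) (x : Fin m → Bool),
        ((cImp S f μ allNone (trunc d t)).cost x : ℝ) ≤ ((min d (t.cost x) : ℕ) : ℝ) +
          (if t.cost x ≤ d then (m:ℝ)*(1 - leafScore S f μ t x)/δ else (m:ℝ)) := by
      intro d x
      have h1 := cImp_cost_le (S := S) (f := f) hμ0 (trunc d t) x
      have h2 := trunc_cost_le d t x
      by_cases hcd : t.cost x ≤ d
      · rw [if_pos hcd]
        have hsc := trunc_leafScore (S := S) (f := f) (μ := μ) d t x hcd
        rw [hsc] at h1
        by_cases hpure : leafScore S f μ t x = 1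
        · rw [if_pos hpure, mul_zero, add_zero] at h1
          have hnn : (0:ℝ) ≤ (m:ℝ)*(1 - leafScore S f μ t x)/δ := by
            rw [hpure]; simp
          have hle : ((cImp S f μ allNone (trunc d t)).cost x : ℝ)
              ≤ ((min d (t.cost x) : ℕ) : ℝ) := by
            exact_mod_cast le_trans h1 h2
          linarith
        · rw [if_neg hpure, mul_one] at h1
          have hgap : δ ≤ 1 - leafScore S f μ t x := by
            rw [← hδdef]; exact gapδ_le_impure hμ0 t x hpure
          have hmle : (m:ℝ) ≤ (m:ℝ)*(1 - leafScore S f μ t x)/δ := by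
            rw [le_div_iff₀ hδpos]
            have hm0 : (0:ℝ) ≤ (m:ℝ) := Nat.cast_nonneg m
            nlinarith
          have hcast : ((cImp S f μ allNone (trunc d t)).cost x : ℝ) ≤
              ((min d (t.cost x) : ℕ) : ℝ) + (m:ℝ) := by
            exact_mod_cast le_trans h1 (by omega : (trunc d t).cost x + m ≤ min d (t.cost x) + m)
          linarith
      · rw [if_neg hcd]
        have hle : (cImp S f μ allNone (trunc d t)).cost x ≤ min d (t.cost x) + m := by
          refine le_trans h1 ?_
          have hite : (if leafScore S f μ (trunc d t) x = 1 then 0 else 1) ≤ 1 := by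
            split <;> omega
          have hmm : m * (if leafScore S f μ (trunc d t) x = 1 then 0 else 1) ≤ m :=
            le_trans (Nat.mul_le_mul_left m hite) (by omega)
          omega
        exact_mod_cast hle
    have hNum : algNum S f μ Rc ≤
        Vt μ β t / (1-ρ) + ((m:ℝ)/δ) * (1 - tDsc S f μ β t) + (m:ℝ) * Vt μ β t := by
      rw [hRcdef, algNum, mixAlg_F]
      have swap : ∑ d ∈ Finset.range (cap+1), gw ρ cap d *
          tNum S f μ (cImp S f μ allNone (trunc d t))
          = ∑ x, ∑ d ∈ Finset.range (cap+1), gw ρ cap d *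
              (μ x * ((cImp S f μ allNone (trunc d t)).cost x : ℝ)) := by
        have hh : ∀ d ∈ Finset.range (cap+1), gw ρ cap d *
            tNum S f μ (cImp S f μ allNone (trunc d t))
            = ∑ x, gw ρ cap d * (μ x * ((cImp S f μ allNone (trunc d t)).cost x : ℝ)) := by
          intro d _
          rw [tNum, Finset.mul_sum]
          apply Finset.sum_congr rfl
          intro x _
          rw [cImp_score_one hμ0, one_mul]
        rw [Finset.sum_congr rfl hh]
        exact Finset.sum_comm
      rw [swap]
      have hper : ∀ x : Fin m → Bool, ∑ d ∈ Finset.range (cap+1), gw ρ cap d *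
          (μ x * ((cImp S f μ allNone (trunc d t)).cost x : ℝ))
          ≤ (μ x * (1 - Real.exp (-(β * (t.cost x : ℝ)))))/(1-ρ)
            + ((m:ℝ)/δ) * (μ x * (Real.exp (-(β * (t.cost x : ℝ)))
                * (1 - leafScore S f μ t x)))
            + (m:ℝ) * (μ x * (1 - Real.exp (-(β * (t.cost x : ℝ))))) := by
        intro x
        have hc : t.cost x ≤ cap := cost_le_depth t x
        have hb1 : ∑ d ∈ Finset.range (cap+1), gw ρ cap d *
            (μ x * ((cImp S f μ allNone (trunc d t)).cost x : ℝ))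
            ≤ ∑ d ∈ Finset.range (cap+1), (μ x * (gw ρ cap d * ((min d (t.cost x) : ℕ) : ℝ))
              + μ x * (gw ρ cap d *
                (if t.cost x ≤ d then (m:ℝ)*(1 - leafScore S f μ t x)/δ else (m:ℝ)))) := by
          apply Finset.sum_le_sum
          intro d _
          have := mul_le_mul_of_nonneg_left
            (mul_le_mul_of_nonneg_left (hstep d x) (hμ0 x))
            (gw_nonneg hρ0.le hρ1.le cap d)
          calc gw ρ cap d * (μ x * ((cImp S f μ allNone (trunc d t)).cost x : ℝ))
              ≤ gw ρ cap d * (μ x * (((min d (t.cost x) : ℕ) : ℝ) +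
                (if t.cost x ≤ d then (m:ℝ)*(1 - leafScore S f μ t x)/δ else (m:ℝ)))) := this
            _ = μ x * (gw ρ cap d * ((min d (t.cost x) : ℕ) : ℝ))
              + μ x * (gw ρ cap d *
                (if t.cost x ≤ d then (m:ℝ)*(1 - leafScore S f μ t x)/δ else (m:ℝ))) := by
                ring
        refine le_trans hb1 ?_
        rw [Finset.sum_add_distrib, ← Finset.mul_sum, ← Finset.mul_sum]
        have hA := gw_min hρ0.le hρ1 hc
        have hB := gw_ite hρne hc ((m:ℝ)*(1 - leafScore S f μ t x)/δ) ((m:ℝ))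
        rw [hB]
        have hrw : ρ^(t.cost x) = Real.exp (-(β * (t.cost x : ℝ))) := by
          rw [hρdef, exp_pow_cost]
        have hmul1 : μ x * (∑ d ∈ Finset.range (cap+1), gw ρ cap d * ((min d (t.cost x):ℕ):ℝ))
            ≤ μ x * ((1 - ρ^(t.cost x))/(1-ρ)) := mul_le_mul_of_nonneg_left hA (hμ0 x)
        rw [hrw] at hmul1
        have hmul1' : μ x * (∑ d ∈ Finset.range (cap+1),
            gw ρ cap d * ((min d (t.cost x):ℕ):ℝ))
            ≤ (μ x * (1 - Real.exp (-(β * (t.cost x : ℝ)))))/(1-ρ) := by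
          rw [← mul_div_assoc] at hmul1
          exact hmul1
        have heq2 : μ x * (Real.exp (-(β * (t.cost x : ℝ))) * ((m:ℝ)*(1 - leafScore S f μ t x)/δ)
              + (1 - Real.exp (-(β * (t.cost x : ℝ)))) * (m:ℝ))
            = ((m:ℝ)/δ) * (μ x * (Real.exp (-(β * (t.cost x : ℝ)))
                * (1 - leafScore S f μ t x)))
              + (m:ℝ) * (μ x * (1 - Real.exp (-(β * (t.cost x : ℝ))))) := by
          field_simp
        rw [hrw, heq2]
        linarith [hmul1']
      refine le_trans (Finset.sum_le_sum (fun x _ => hper x)) ?_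
      rw [Finset.sum_add_distrib, Finset.sum_add_distrib, ← Finset.sum_div,
        ← Finset.mul_sum, ← Finset.mul_sum]
      have hVt1 : ∑ x, μ x * (1 - Real.exp (-(β * (t.cost x : ℝ)))) = Vt μ β t := rfl
      rw [hVt1]
      have hE1 : ∑ x, μ x * (Real.exp (-(β * (t.cost x : ℝ))) * (1 - leafScore S f μ t x))
          ≤ 1 - tDsc S f μ β t := by
        have hsum : 1 - tDsc S f μ β t
            = ∑ x, (μ x - μ x * (leafScore S f μ t x
                * Real.exp (-(β * (t.cost x : ℝ))))) := by
          rw [Finset.sum_sub_distrib, hμ1, tDsc]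
        rw [hsum]
        apply Finset.sum_le_sum
        intro x _
        have he1 : Real.exp (-(β * (t.cost x : ℝ))) ≤ 1 := by
          rw [Real.exp_le_one_iff]
          have : (0:ℝ) ≤ β * (t.cost x : ℝ) := mul_nonneg hβpos.le (Nat.cast_nonneg _)
          linarith
        have hs := leafScore_mem (S := S) (f := f) hμ0 t x
        have hμe : μ x * Real.exp (-(β * (t.cost x : ℝ))) ≤ μ x :=
          mul_le_of_le_one_right (hμ0 x) he1
        nlinarith [hs.2, hμ0 x, (Real.exp_pos (-(β * (t.cost x : ℝ)))).le]
      have hmδ : (0:ℝ) ≤ (m:ℝ)/δ := div_nonneg (Nat.cast_nonneg m) hδpos.le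
      have := mul_le_mul_of_nonneg_left hE1 hmδ
      linarith
    -- conclude the κ-step
    have hVle : Vt μ β t ≤ 2*(1 - tDsc S f μ β t) := by
      have ha := Vt_le_two_sub (S := S) (f := f) hμ0 hμ1 hβpos.le t
      have hb : tDsc S f μ β t ≤ Wt S f μ β t := by
        have hc := tDsc_eq_Wt_sub (S := S) (f := f) (μ := μ) β t
        have hv := Vt_nonneg (μ := μ) hμ0 hβpos.le t
        linarith
      linarith
    have hVnn := Vt_nonneg (μ := μ) hμ0 hβpos.le t
    have hG0 : 0 ≤ 1 - tDsc S f μ β t := by linarith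
    have k1 : Vt μ β t/(1-ρ) ≤ 4*(1 - tDsc S f μ β t)/β := by
      have ha := div_le_div_of_nonneg_left hVnn (show (0:ℝ) < β/2 by linarith) h1ρ
      have hb : Vt μ β t/(β/2) = 2*Vt μ β t/β := by
        field_simp
      have hcc : 2*Vt μ β t/β ≤ 4*(1 - tDsc S f μ β t)/β := by
        rw [div_le_div_iff₀ hβpos hβpos]
        nlinarith
      rw [hb] at ha
      linarith
    have k3 : (m:ℝ) * Vt μ β t ≤ 2*(m:ℝ)*(1 - tDsc S f μ β t) := by
      have hm0 : (0:ℝ) ≤ (m:ℝ) := Nat.cast_nonneg m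
      nlinarith
    have hT : sRdist S f μ 1 ≤ algNum S f μ Rc := by
      have hh := sRdist_le (γ := 1) hμ0 Rc (le_of_eq hSc.symm)
      rwa [scost_eq', hSc, div_one] at hh
    have hchain : algNum S f μ Rc ≤ (7/β)*(1 - tDsc S f μ β t) := by
      have e3 : 4*(1 - tDsc S f μ β t)/β + ((m:ℝ)/δ)*(1 - tDsc S f μ β t)
          + 2*(m:ℝ)*(1 - tDsc S f μ β t)
          = (4/β + (m:ℝ)/δ + 2*(m:ℝ))*(1 - tDsc S f μ β t) := by ring
      have e4 : (4/β + (m:ℝ)/δ + 2*(m:ℝ))*(1 - tDsc S f μ β t)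
          ≤ (7/β)*(1 - tDsc S f μ β t) := mul_le_mul_of_nonneg_right h7 hG0
      calc algNum S f μ Rc ≤ Vt μ β t / (1-ρ) + ((m:ℝ)/δ) * (1 - tDsc S f μ β t)
            + (m:ℝ) * Vt μ β t := hNum
        _ ≤ 4*(1 - tDsc S f μ β t)/β + ((m:ℝ)/δ)*(1 - tDsc S f μ β t)
            + 2*(m:ℝ)*(1 - tDsc S f μ β t) := by linarith
        _ ≤ (7/β)*(1 - tDsc S f μ β t) := by rw [e3] at *; exact e4
    have hfin : (7/β)*(1 - tDsc S f μ β t) ≤ (7/β)*(1 - DS S f μ β) + κ := by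
      have h7β : (0:ℝ) < 7/β := by positivity
      have hstep2 : 1 - tDsc S f μ β t ≤ (1 - DS S f μ β) + (β/7)*κ := by linarith
      calc (7/β)*(1 - tDsc S f μ β t) ≤ (7/β)*((1 - DS S f μ β) + (β/7)*κ) :=
            mul_le_mul_of_nonneg_left hstep2 h7β.le
        _ = (7/β)*(1 - DS S f μ β) + κ := by
            field_simp
    linarith
  -- wrap up
  have hDSpos : 0 < DS S f μ β := DS_pos hμ0 hμ1 hβpos.le
  have hDSle1 : DS S f μ β ≤ 1 := DS_le_one hμ0 hμ1 hβpos.le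
  have hlog : 1 - DS S f μ β ≤ Real.log (1 / DS S f μ β) := by
    have h1 : Real.log (DS S f μ β) ≤ DS S f μ β - 1 := Real.log_le_sub_one_of_pos hDSpos
    rw [one_div, Real.log_inv]
    linarith
  have hnn : 0 ≤ 1 - DS S f μ β := by linarith
  have s1 : (7/β)*(1 - DS S f μ β) ≤ (8/β)*(1 - DS S f μ β) := by
    have : (7:ℝ)/β ≤ 8/β := by
      rw [div_le_div_iff₀ hβpos hβpos]
      nlinarith
    exact mul_le_mul_of_nonneg_right this hnn
  have s2 : (8/β)*(1 - DS S f μ β) ≤ (8/β)*Real.log (1/DS S f μ β) :=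
    mul_le_mul_of_nonneg_left hlog (by positivity)
  linarith

end CaseA

end EL
/-- **Equivalence lemma, upper bound**: there is a universal constant `C` such that for every
score function, function `f`, distribution `μ` and `γ` at least the score of the trivial
zero-query algorithm, there is a discount factor `α* > 0` with
`sR̄̄_γ^μ(f) ≤ (C/α*)·ln(γ / DS_{α*}^μ(f))`. -/
theorem equivalence_lemma_upper_bound :
    ∃ C : ℝ, 0 < C ∧
      ∀ (m : ℕ) (S : ScoreFun) (X : Set (Fin m → Bool)) (f : (Fin m → Bool) → Bool)
        (μ : InputDist (Fin m) X) (γ : ℝ),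
        S.φ (mass μ.μ {y | f y = true}) ≤ γ → γ ≤ 1 →
        ∃ α : ℝ, 0 < α ∧
          sRdist S f μ.μ γ ≤ (C / α) * Real.log (γ / DS S f μ.μ α) := by
  refine ⟨8, by norm_num, ?_⟩
  intro m S X f μ γ hγl hγ1
  have hμ0 : ∀ x, 0 ≤ μ.μ x := μ.nonneg
  have hμ1 : ∑ x, μ.μ x = 1 := μ.sum_one
  rcases lt_or_ge γ 1 with hlt | hge
  · rcases lt_or_ge (S.φ (mass μ.μ {y | f y = true})) γ with h | h
    · exact EL.caseB hμ0 hμ1 h hlt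
    · exact EL.case0 hμ0 hμ1 h hγl
  · have hγeq : γ = 1 := le_antisymm hγ1 hge
    subst hγeq
    exact EL.caseA hμ0 hμ1
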